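/- arXiv:2511.12531 — 7 statements merged into one kernel-verified Lean document; each statement's English description precedes it below -/
import Mathlib

section
/- For every nontrivial finite-dimensional Lie algebra C over a field K of characteristic 0, there exists a short exact sequence of Lie algebras 0 → A → B → C → 0 such that B is not isomorphic (as a Lie algebra) to the direct sum A ⊕ C. -/
section LieProd
variable (K : Type*) [CommRing K] (A C : Type*) [LieRing A] [LieRing C]

instance Prod.instLieRing : LieRing (A × C) where
  bracket x y := (⁅x.1, y.1⁆, ⁅x.2, y.2⁆)
  add_lie x y z := by ext <;> simp [add_lie]
  lie_add x y z := by ext <;> simp [lie_add]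
  lie_self x := by ext <;> simp
  leibniz_lie x y z := by ext <;> simp

@[simp] lemma Prod.lie_def (x y : A × C) : ⁅x, y⁆ = (⁅x.1, y.1⁆, ⁅x.2, y.2⁆) := rfl

instance Prod.instLieAlgebraProd [LieAlgebra K A] [LieAlgebra K C] : LieAlgebra K (A × C) where
  lie_smul t x y := by ext <;> simp

end LieProd

/-- A short exact sequence of Lie algebras 0 → A → B → C → 0 (an extension of C)
that does not split trivially, i.e. B ≇ A ⊕ C as Lie algebras. -/
structure NonTrivialExtensionOf (K : Type u) [Field K] [CharZero K]
    (C : Type u) [LieRing C] [LieAlgebra K C] : Type (u + 1) where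
  A : Type u
  B : Type u
  [lieRingA : LieRing A]
  [lieAlgebraA : LieAlgebra K A]
  [finiteA : Module.Finite K A]
  [lieRingB : LieRing B]
  [lieAlgebraB : LieAlgebra K B]
  [finiteB : Module.Finite K B]
  ι : A →ₗ⁅K⁆ B
  π : B →ₗ⁅K⁆ C
  inj : Function.Injective ι
  surj : Function.Surjective π
  exact : ∀ b : B, π b = 0 ↔ b ∈ Set.range ι
  not_trivially_split : IsEmpty (B ≃ₗ⁅K⁆ A × C)


universe u

namespace NonsplitAux

/-- Type synonym making a module into an abelian Lie algebra. -/
def Ab (V : Type u) : Type u := V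

instance (V : Type u) [AddCommGroup V] : AddCommGroup (Ab V) := inferInstanceAs (AddCommGroup V)
instance (K : Type*) (V : Type u) [CommRing K] [AddCommGroup V] [Module K V] :
    Module K (Ab V) := inferInstanceAs (Module K V)

instance (V : Type u) [AddCommGroup V] : LieRing (Ab V) where
  bracket _ _ := 0
  add_lie _ _ _ := by simp
  lie_add _ _ _ := by simp
  lie_self _ := rfl
  leibniz_lie _ _ _ := by simp

@[simp] lemma Ab.lie_def {V : Type u} [AddCommGroup V] (x y : Ab V) : ⁅x, y⁆ = 0 := rfl

instance (K : Type*) (V : Type u) [CommRing K] [AddCommGroup V] [Module K V] :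
    LieAlgebra K (Ab V) where
  lie_smul _ _ _ := by simp

instance (K : Type*) (V : Type u) [CommRing K] [AddCommGroup V] [Module K V]
    [Module.Finite K V] : Module.Finite K (Ab V) := inferInstanceAs (Module.Finite K V)

variable (K : Type*) [CommRing K]
variable (V : Type u) [AddCommGroup V] [Module K V]
variable (C : Type u) [LieRing C] [LieAlgebra K C]

/-- A representation of `C` on `V`, given as raw data. -/
structure RepData where
  ρ : C →ₗ[K] Module.End K V
  hrep : ∀ a b : C, ρ ⁅a, b⁆ = ρ a * ρ b - ρ b * ρ a

/-- Semidirect product `V ⋊_ρ C`. -/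
def SD (_r : RepData K V C) : Type u := V × C

variable (r : RepData K V C)

instance : AddCommGroup (SD K V C r) := inferInstanceAs (AddCommGroup (V × C))
instance : Module K (SD K V C r) := inferInstanceAs (Module K (V × C))
instance [Module.Finite K V] [Module.Finite K C] : Module.Finite K (SD K V C r) :=
  inferInstanceAs (Module.Finite K (V × C))

variable {K V C}

instance : LieRing (SD K V C r) where
  bracket x y := (r.ρ x.2 y.1 - r.ρ y.2 x.1, ⁅x.2, y.2⁆)
  add_lie x y z := by
    apply Prod.ext
    · show r.ρ (x.2 + y.2) z.1 - r.ρ z.2 (x.1 + y.1) =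
        (r.ρ x.2 z.1 - r.ρ z.2 x.1) + (r.ρ y.2 z.1 - r.ρ z.2 y.1)
      simp only [map_add, LinearMap.add_apply]
      abel
    · show ⁅x.2 + y.2, z.2⁆ = ⁅x.2, z.2⁆ + ⁅y.2, z.2⁆
      exact add_lie _ _ _
  lie_add x y z := by
    apply Prod.ext
    · show r.ρ x.2 (y.1 + z.1) - r.ρ (y.2 + z.2) x.1 =
        (r.ρ x.2 y.1 - r.ρ y.2 x.1) + (r.ρ x.2 z.1 - r.ρ z.2 x.1)
      simp only [map_add, LinearMap.add_apply]
      abel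
    · show ⁅x.2, y.2 + z.2⁆ = ⁅x.2, y.2⁆ + ⁅x.2, z.2⁆
      exact lie_add _ _ _
  lie_self x := by
    apply Prod.ext
    · show r.ρ x.2 x.1 - r.ρ x.2 x.1 = 0
      simp
    · show ⁅x.2, x.2⁆ = 0
      simp
  leibniz_lie x y z := by
    apply Prod.ext
    · show r.ρ x.2 (r.ρ y.2 z.1 - r.ρ z.2 y.1) - r.ρ ⁅y.2, z.2⁆ x.1 =
        (r.ρ ⁅x.2, y.2⁆ z.1 - r.ρ z.2 (r.ρ x.2 y.1 - r.ρ y.2 x.1)) +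
          (r.ρ y.2 (r.ρ x.2 z.1 - r.ρ z.2 x.1) - r.ρ ⁅x.2, z.2⁆ y.1)
      simp only [r.hrep, LinearMap.sub_apply, Module.End.mul_apply, map_sub]
      abel
    · show ⁅x.2, ⁅y.2, z.2⁆⁆ = ⁅⁅x.2, y.2⁆, z.2⁆ + ⁅y.2, ⁅x.2, z.2⁆⁆
      exact leibniz_lie _ _ _

@[simp] lemma SD.lie_def (x y : SD K V C r) :
    ⁅x, y⁆ = (r.ρ x.2 y.1 - r.ρ y.2 x.1, ⁅x.2, y.2⁆) := rfl

instance : LieAlgebra K (SD K V C r) where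
  lie_smul t x y := by
    apply Prod.ext
    · show r.ρ x.2 (t • y.1) - r.ρ (t • y.2) x.1 = t • (r.ρ x.2 y.1 - r.ρ y.2 x.1)
      simp [smul_sub]
    · show ⁅x.2, t • y.2⁆ = t • ⁅x.2, y.2⁆
      simp

/-- Inclusion of the abelian kernel. -/
def ιSD : Ab V →ₗ⁅K⁆ SD K V C r where
  toFun v := ((v : V), (0 : C))
  map_add' a b := by
    apply Prod.ext
    · rfl
    · show (0 : C) = 0 + 0
      simp
  map_smul' t a := by
    apply Prod.ext
    · rfl
    · show (0 : C) = t • 0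
      simp
  map_lie' {a b} := by
    apply Prod.ext
    · show (0 : V) = r.ρ 0 b - r.ρ 0 a
      rw [map_zero]
      exact (sub_zero (0 : V)).symm
    · show (0 : C) = ⁅(0 : C), 0⁆
      simp

/-- Projection onto `C`. -/
def πSD : SD K V C r →ₗ⁅K⁆ C where
  toFun x := x.2
  map_add' _ _ := rfl
  map_smul' _ _ := rfl
  map_lie' := rfl

lemma ιSD_injective : Function.Injective (ιSD r) :=
  fun _ _ h => congrArg Prod.fst h

lemma πSD_surjective : Function.Surjective (πSD r) :=
  fun c => ⟨((0 : V), c), rfl⟩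

lemma SD_exact (b : SD K V C r) : πSD r b = 0 ↔ b ∈ Set.range (ιSD r) := by
  constructor
  · intro h
    exact ⟨b.1, Prod.ext rfl h.symm⟩
  · rintro ⟨v, rfl⟩
    rfl

section Derived

variable (K) in
/-- The linear span of all brackets. -/
def derivedSub (L : Type u) [LieRing L] [LieAlgebra K L] : Submodule K L :=
  Submodule.span K {z : L | ∃ x y : L, ⁅x, y⁆ = z}

lemma derivedSub_map {L L' : Type u} [LieRing L] [LieAlgebra K L] [LieRing L']
    [LieAlgebra K L'] (e : L ≃ₗ⁅K⁆ L') :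
    (derivedSub K L).map (e.toLinearEquiv : L →ₗ[K] L') = derivedSub K L' := by
  rw [derivedSub, derivedSub, Submodule.map_span]
  congr 1
  ext z
  constructor
  · rintro ⟨w, ⟨x, y, rfl⟩, rfl⟩
    exact ⟨e x, e y, (e.map_lie x y).symm⟩
  · rintro ⟨x, y, rfl⟩
    exact ⟨⁅e.symm x, e.symm y⁆, ⟨e.symm x, e.symm y, rfl⟩, by
      show e ⁅e.symm x, e.symm y⁆ = ⁅x, y⁆
      rw [e.map_lie]
      simp⟩

end Derived

variable (K C) in
/-- The canonical linear section of the projection. -/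
def inrSD : C →ₗ[K] SD K V C r where
  toFun c := ((0 : V), c)
  map_add' a b := by
    apply Prod.ext
    · show (0 : V) = 0 + 0
      simp
    · rfl
  map_smul' t a := by
    apply Prod.ext
    · show (0 : V) = t • 0
      simp
    · rfl

lemma inrSD_injective : Function.Injective (inrSD K C r) :=
  fun _ _ h => congrArg Prod.snd h

lemma map_inrSD_le : (derivedSub K C).map (inrSD K C r) ≤ derivedSub K (SD K V C r) := by
  rw [derivedSub, Submodule.map_span]
  refine Submodule.span_le.2 ?_
  rintro _ ⟨w, ⟨a, b, rfl⟩, rfl⟩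
  refine Submodule.subset_span ⟨((0 : V), a), ((0 : V), b), ?_⟩
  apply Prod.ext
  · show r.ρ a 0 - r.ρ b 0 = 0
    simp
  · rfl

lemma mem_derivedSub_SD (x : C) (v : V) :
    ((r.ρ x v, (0 : C)) : SD K V C r) ∈ derivedSub K (SD K V C r) := by
  refine Submodule.subset_span ⟨((0 : V), x), (v, (0 : C)), ?_⟩
  apply Prod.ext
  · show r.ρ x v - r.ρ 0 0 = r.ρ x v
    simp
  · show ⁅x, (0 : C)⁆ = 0
    simp

lemma derivedSub_prod_le :
    derivedSub K (Ab V × C) ≤ (derivedSub K C).map (LinearMap.inr K (Ab V) C) := by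
  refine Submodule.span_le.2 ?_
  rintro _ ⟨a, b, rfl⟩
  refine ⟨⁅a.2, b.2⁆, Submodule.subset_span ⟨a.2, b.2, rfl⟩, ?_⟩
  apply Prod.ext
  · show (0 : Ab V) = ⁅a.1, b.1⁆
    simp
  · rfl

end NonsplitAux

open NonsplitAux Module in
theorem mainAux (K : Type u) [Field K] [CharZero K]
    (C : Type u) [LieRing C] [LieAlgebra K C] [Module.Finite K C]
    (V : Type u) [AddCommGroup V] [Module K V] [Module.Finite K V]
    (r : RepData K V C) (x : C) (v : V) (hr : r.ρ x v ≠ 0) :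
    Nonempty (NonTrivialExtensionOf K C) := by
  refine ⟨⟨Ab V, SD K V C r, ιSD r, πSD r, ιSD_injective r, πSD_surjective r,
    SD_exact r, ⟨fun e => ?_⟩⟩⟩
  have hlt : (derivedSub K C).map (inrSD K C r) < derivedSub K (SD K V C r) := by
    refine lt_of_le_of_ne (map_inrSD_le r) fun h => ?_
    have hmem : ((r.ρ x v, (0 : C)) : SD K V C r) ∈ (derivedSub K C).map (inrSD K C r) :=
      h ▸ mem_derivedSub_SD r x v
    obtain ⟨c, -, hc⟩ := hmem
    exact hr (congrArg Prod.fst hc).symm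
  have e1 : finrank K (derivedSub K (SD K V C r)) = finrank K (derivedSub K (Ab V × C)) := by
    rw [← derivedSub_map e, LinearEquiv.finrank_map_eq]
  have e2 : finrank K ((derivedSub K C).map (LinearMap.inr K (Ab V) C)) =
      finrank K (derivedSub K C) :=
    ((Submodule.equivMapOfInjective _ LinearMap.inr_injective _).finrank_eq).symm
  have e3 : finrank K ((derivedSub K C).map (inrSD K C r)) = finrank K (derivedSub K C) :=
    ((Submodule.equivMapOfInjective _ (inrSD_injective r) _).finrank_eq).symm
  have hcontra : finrank K (derivedSub K (SD K V C r)) < finrank K (derivedSub K (SD K V C r)) :=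
    calc finrank K (derivedSub K (SD K V C r))
        = finrank K (derivedSub K (Ab V × C)) := e1
      _ ≤ finrank K ((derivedSub K C).map (LinearMap.inr K (Ab V) C)) :=
          Submodule.finrank_mono derivedSub_prod_le
      _ = finrank K (derivedSub K C) := e2
      _ = finrank K ((derivedSub K C).map (inrSD K C r)) := e3.symm
      _ < finrank K (derivedSub K (SD K V C r)) := Submodule.finrank_lt_finrank_of_lt hlt
  exact absurd hcontra (lt_irrefl _)

attribute [local instance 100] LieRing.ofAssociativeRing

/-- every nontrivial finite-dimensional Lie algebra C over a field of
characteristic 0 admits an extension 0 → A → B → C → 0 with B ≇ A ⊕ C. -/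
theorem exists_nonsplit_extension_of_nontrivial
    (K : Type u) [Field K] [CharZero K]
    (C : Type u) [LieRing C] [LieAlgebra K C] [Module.Finite K C] [Nontrivial C] :
    Nonempty (NonTrivialExtensionOf K C) := by
  by_cases h : ∃ x y : C, ⁅x, y⁆ ≠ 0
  · obtain ⟨x, y, hxy⟩ := h
    refine mainAux K C C ⟨(LieAlgebra.ad K C).toLinearMap, fun a b => ?_⟩ x y
      (by simpa [LieAlgebra.ad_apply] using hxy)
    show LieAlgebra.ad K C ⁅a, b⁆ =
      LieAlgebra.ad K C a * LieAlgebra.ad K C b - LieAlgebra.ad K C b * LieAlgebra.ad K C a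
    ext z
    simp [LieAlgebra.ad_apply, sub_lie, lie_lie]
  · push_neg at h
    obtain ⟨c, hc⟩ := exists_ne (0 : C)
    obtain ⟨f, hf⟩ : ∃ f : Module.Dual K C, f c ≠ 0 := by
      by_contra hcon
      push_neg at hcon
      exact hc ((Module.forall_dual_apply_eq_zero_iff K c).1 hcon)
    refine mainAux K C K ⟨f.smulRight (1 : Module.End K K), fun a b => ?_⟩ c 1 ?_
    · simp only [LinearMap.smulRight_apply, h a b, map_zero, zero_smul,
        smul_mul_smul_comm, one_mul, mul_comm (f a) (f b), sub_self]
    · show (f.smulRight (1 : Module.End K K)) c 1 ≠ 0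
      simpa using hf
end

section
/- The direct sum of two complete Lie algebras is complete: if A₁ and A₂ are Lie algebras with trivial center and all derivations inner, then A₁ ⊕ A₂ has trivial center and all derivations of A₁ ⊕ A₂ are inner. -/
/-- the direct sum of two complete Lie algebras is complete: if A₁ and A₂
have trivial center and only inner derivations, so does A₁ ⊕ A₂ (with componentwise
bracket). -/
theorem prod_complete_of_complete
    (K : Type*) [Field K] [CharZero K]
    (A₁ A₂ : Type*)
    [LieRing A₁] [LieAlgebra K A₁] [Module.Finite K A₁]
    [LieRing A₂] [LieAlgebra K A₂] [Module.Finite K A₂]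
    (hZ₁ : LieAlgebra.center K A₁ = ⊥)
    (hD₁ : ∀ D : LieDerivation K A₁ A₁, ∃ a : A₁, D = LieDerivation.ad K A₁ a)
    (hZ₂ : LieAlgebra.center K A₂ = ⊥)
    (hD₂ : ∀ D : LieDerivation K A₂ A₂, ∃ a : A₂, D = LieDerivation.ad K A₂ a) :
    LieAlgebra.center K (A₁ × A₂) = ⊥ ∧
      ∀ D : LieDerivation K (A₁ × A₂) (A₁ × A₂),
        ∃ a : A₁ × A₂, D = LieDerivation.ad K (A₁ × A₂) a := by
  have z₁ : ∀ z : A₁, (∀ x : A₁, ⁅x, z⁆ = 0) → z = 0 := by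
    intro z hz
    have : z ∈ LieAlgebra.center K A₁ := (LieModule.mem_maxTrivSubmodule K A₁ A₁ z).mpr hz
    rwa [hZ₁, LieSubmodule.mem_bot] at this
  have z₂ : ∀ z : A₂, (∀ x : A₂, ⁅x, z⁆ = 0) → z = 0 := by
    intro z hz
    have : z ∈ LieAlgebra.center K A₂ := (LieModule.mem_maxTrivSubmodule K A₂ A₂ z).mpr hz
    rwa [hZ₂, LieSubmodule.mem_bot] at this
  constructor
  · rw [LieSubmodule.eq_bot_iff]
    intro m hm
    rw [LieModule.mem_maxTrivSubmodule] at hm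
    have h1 : m.1 = 0 := z₁ m.1 fun x => congrArg Prod.fst (hm (x, 0))
    have h2 : m.2 = 0 := z₂ m.2 fun x => congrArg Prod.snd (hm (0, x))
    exact Prod.ext h1 h2
  · intro D
    -- cross components vanish
    have hf : ∀ x : A₁, (D (x, 0)).2 = 0 := by
      intro x
      refine z₂ _ fun a => ?_
      have := D.apply_lie_eq_sub (0, a) (x, 0)
      simp only [Prod.lie_def, zero_lie, lie_zero] at this
      have h2 := congrArg Prod.snd this
      simpa [show ((0 : A₁), (0 : A₂)) = (0 : A₁ × A₂) from rfl] using h2.symm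
    have hg : ∀ y : A₂, (D (0, y)).1 = 0 := by
      intro y
      refine z₁ _ fun a => ?_
      have := D.apply_lie_eq_sub (a, 0) (0, y)
      simp only [Prod.lie_def, zero_lie, lie_zero] at this
      have h1 := congrArg Prod.fst this
      simpa [show ((0 : A₁), (0 : A₂)) = (0 : A₁ × A₂) from rfl] using h1.symm
    -- component derivations
    let D₁ : LieDerivation K A₁ A₁ :=
      { toFun := fun x => (D (x, 0)).1
        map_add' := fun x y => by
          show (D (x + y, 0)).1 = (D (x, 0)).1 + (D (y, 0)).1
          have : ((x + y, 0) : A₁ × A₂) = (x, 0) + (y, 0) := by simp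
          rw [this, map_add]; rfl
        map_smul' := fun t x => by
          show (D (t • x, 0)).1 = t • (D (x, 0)).1
          have : ((t • x, 0) : A₁ × A₂) = t • (x, 0) := by simp
          rw [this, map_smul]; rfl
        leibniz' := fun a b => by
          have := D.apply_lie_eq_sub (a, 0) (b, 0)
          simp only [Prod.lie_def, lie_zero] at this
          have h1 := congrArg Prod.fst this
          simpa using h1 }
    let D₂ : LieDerivation K A₂ A₂ :=
      { toFun := fun x => (D (0, x)).2
        map_add' := fun x y => by
          show (D (0, x + y)).2 = (D (0, x)).2 + (D (0, y)).2
          have : ((0, x + y) : A₁ × A₂) = (0, x) + (0, y) := by simp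
          rw [this, map_add]; rfl
        map_smul' := fun t x => by
          show (D (0, t • x)).2 = t • (D (0, x)).2
          have : ((0, t • x) : A₁ × A₂) = t • (0, x) := by simp
          rw [this, map_smul]; rfl
        leibniz' := fun a b => by
          have := D.apply_lie_eq_sub (0, a) (0, b)
          simp only [Prod.lie_def, lie_zero] at this
          have h2 := congrArg Prod.snd this
          simpa using h2 }
    obtain ⟨a₁, ha₁⟩ := hD₁ D₁
    obtain ⟨a₂, ha₂⟩ := hD₂ D₂
    refine ⟨(a₁, a₂), ?_⟩
    ext x
    · have hsplit : (x : A₁ × A₂) = (x.1, 0) + (0, x.2) := by simp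
      have e1 : (D (x.1, 0)).1 = ⁅a₁, x.1⁆ := by
        have := DFunLike.congr_fun ha₁ x.1
        simpa [D₁] using this
      rw [hsplit, map_add]
      simp [Prod.fst_add, e1, hg x.2]
    · have hsplit : (x : A₁ × A₂) = (x.1, 0) + (0, x.2) := by simp
      have e2 : (D (0, x.2)).2 = ⁅a₂, x.2⁆ := by
        have := DFunLike.congr_fun ha₂ x.2
        simpa [D₂] using this
      rw [hsplit, map_add]
      simp [Prod.snd_add, e2, hf x.1]
end

section
/- Let A be a complete Lie algebra (trivial center and every derivation inner). Then every short exact sequence of Lie algebras 0 → A →ι B →π V → 0 with V a finite-dimensional abelian Lie algebra splits trivially, i.e., B is isomorphic to the Lie algebra direct sum A ⊕ V. -/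
/-- If A is a complete Lie algebra (trivial center, all derivations inner),
then every short exact sequence 0 → A →ι B →π V → 0 with V finite-dimensional abelian
splits trivially: B ≅ A ⊕ V. -/
theorem cocentral_extension_trivial_split_of_complete
    (K : Type*) [Field K] [CharZero K]
    (A B V : Type*)
    [LieRing A] [LieAlgebra K A] [Module.Finite K A]
    [LieRing B] [LieAlgebra K B] [Module.Finite K B]
    [LieRing V] [LieAlgebra K V] [Module.Finite K V] [IsLieAbelian V]
    (hcenter : LieAlgebra.center K A = ⊥)
    (hder : ∀ D : LieDerivation K A A, ∃ a : A, D = LieDerivation.ad K A a)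
    (ι : A →ₗ⁅K⁆ B) (π : B →ₗ⁅K⁆ V)
    (hι : Function.Injective ι) (hπ : Function.Surjective π)
    (hexact : ∀ b : B, π b = 0 ↔ b ∈ Set.range ι) :
    Nonempty (B ≃ₗ⁅K⁆ A × V) := by
  classical
  -- π ∘ ι = 0
  have hπι : ∀ x : A, π (ι x) = 0 := fun x => (hexact (ι x)).mpr ⟨x, rfl⟩
  -- triviality of the center, unfolded
  have hcent : ∀ a : A, (∀ x : A, ⁅a, x⁆ = 0) → a = 0 := by
    intro a ha
    have : a ∈ LieAlgebra.center K A := by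
      rw [LieModule.mem_maxTrivSubmodule]
      intro x
      rw [← lie_skew, ha x, neg_zero]
    rw [hcenter] at this
    exact this
  -- for each b, bracket with ι x lands in range ι
  have hmem : ∀ (b : B) (x : A), ∃ y : A, ι y = ⁅b, ι x⁆ := by
    intro b x
    have h0 : π ⁅b, ι x⁆ = 0 := by rw [LieHom.map_lie, hπι, lie_zero]
    obtain ⟨y, hy⟩ := (hexact _).mp h0
    exact ⟨y, hy⟩
  choose g hg using hmem
  -- uniqueness of the "adjoint" element
  have huniq : ∀ (b : B) (a a' : A),
      (∀ x, ι ⁅a, x⁆ = ⁅b, ι x⁆) → (∀ x, ι ⁅a', x⁆ = ⁅b, ι x⁆) → a = a' := by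
    intro b a a' ha ha'
    have hz : ∀ x : A, ⁅a - a', x⁆ = 0 := by
      intro x
      apply hι
      rw [sub_lie, map_sub, map_zero, ha, ha', sub_self]
    exact sub_eq_zero.mp (hcent _ hz)
  -- existence via the derivation hypothesis
  have hex : ∀ b : B, ∃ a : A, ∀ x : A, ι ⁅a, x⁆ = ⁅b, ι x⁆ := by
    intro b
    -- g b is a derivation of A
    have gadd : ∀ x y : A, g b (x + y) = g b x + g b y := by
      intro x y
      apply hι
      rw [map_add, hg, hg, hg, map_add, lie_add]
    have gsmul : ∀ (t : K) (x : A), g b (t • x) = t • g b x := by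
      intro t x
      apply hι
      rw [map_smul, hg, hg, map_smul, lie_smul]
    have gleib : ∀ x y : A, g b ⁅x, y⁆ = ⁅x, g b y⁆ - ⁅y, g b x⁆ := by
      intro x y
      apply hι
      simp only [map_sub, LieHom.map_lie, hg]
      rw [leibniz_lie b (ι x) (ι y), ← lie_skew ⁅b, ι x⁆ (ι y)]
      abel
    set D : LieDerivation K A A :=
      { toFun := g b
        map_add' := gadd
        map_smul' := gsmul
        leibniz' := gleib } with hD
    obtain ⟨a, ha⟩ := hder D
    refine ⟨a, fun x => ?_⟩
    have : g b x = ⁅a, x⁆ := by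
      have h1 : D x = (LieDerivation.ad K A a) x := by rw [ha]
      have h2 : (LieDerivation.ad K A a) x = ⁅a, x⁆ := by
        have h3 := LinearMap.congr_fun
          (LieDerivation.coe_ad_apply_eq_ad_apply (R := K) (L := A) a) x
        simp only [LieAlgebra.ad_apply] at h3; exact h3
      simpa [hD, h2] using h1
    rw [← this, hg]
  choose φ hφ using hex
  -- φ is the desired projection B → A; key algebraic identities
  have hφadd : ∀ b b' : B, φ (b + b') = φ b + φ b' := by
    intro b b'
    refine huniq (b + b') _ _ (hφ (b + b')) (fun x => ?_)
    rw [add_lie, map_add, hφ, hφ, add_lie]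
  have hφsmul : ∀ (t : K) (b : B), φ (t • b) = t • φ b := by
    intro t b
    refine huniq (t • b) _ _ (hφ (t • b)) (fun x => ?_)
    rw [smul_lie, map_smul, hφ, smul_lie]
  have hφlie : ∀ b b' : B, φ ⁅b, b'⁆ = ⁅φ b, φ b'⁆ := by
    intro b b'
    refine huniq ⁅b, b'⁆ _ _ (hφ ⁅b, b'⁆) (fun x => ?_)
    rw [lie_lie, map_sub, hφ, hφ, hφ, hφ, lie_lie]
  have hφι : ∀ x : A, φ (ι x) = x := by
    intro x
    refine huniq (ι x) _ _ (hφ (ι x)) (fun y => ?_)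
    rw [LieHom.map_lie]
  -- assemble the Lie algebra morphism B → A × V
  set Φ : B →ₗ⁅K⁆ A × V :=
    { toFun := fun b => (φ b, π b)
      map_add' := fun b b' => by simp [hφadd]
      map_smul' := fun t b => by simp [hφsmul]
      map_lie' := fun {b b'} => by
        ext
        · exact hφlie b b'
        · exact π.map_lie b b' } with hΦ
  have hΦapp : ∀ b : B, Φ b = (φ b, π b) := fun b => rfl
  have hinj : Function.Injective Φ := by
    intro b b' h
    have h' : Φ (b - b') = 0 := by rw [map_sub, h, sub_self]
    rw [hΦapp, Prod.mk_eq_zero] at h'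
    obtain ⟨h1, h2⟩ := h'
    obtain ⟨x, hx⟩ := (hexact _).mp h2
    have : x = 0 := by rw [← hφι x, hx, h1]
    rw [this, map_zero] at hx
    exact sub_eq_zero.mp hx.symm
  have hsurj : Function.Surjective Φ := by
    rintro ⟨a, v⟩
    obtain ⟨b0, hb0⟩ := hπ v
    refine ⟨ι a + (b0 - ι (φ b0)), ?_⟩
    rw [hΦapp]
    have h1 : φ (ι a + (b0 - ι (φ b0))) = a := by
      have : b0 - ι (φ b0) = b0 + (-1 : K) • ι (φ b0) := by
        rw [neg_one_smul]; abel
      rw [this, hφadd, hφadd, hφsmul, hφι, hφι, neg_one_smul]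
      abel
    have h2 : π (ι a + (b0 - ι (φ b0))) = v := by
      rw [map_add, map_sub, hπι, hπι, hb0]
      abel
    rw [h1, h2]
  exact ⟨LieEquiv.ofBijective Φ ⟨hinj, hsurj⟩⟩
end

section
/- Let A be a finite-dimensional solvable Lie algebra over a field of characteristic 0 such that every short exact sequence 0 → A → B → V → 0 with V abelian splits trivially (B ≅ A ⊕ V). Then A is complete: Z(A) = 0 and every derivation of A is inner. -/
attribute [local instance 100] LieRing.ofAssociativeRing

namespace CompleteAux

universe v

instance fieldIsLieAbelian (K : Type v) [Field K] : IsLieAbelian K :=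
  ⟨fun a b => by rw [LieRing.of_associative_ring_bracket, mul_comm, sub_self]⟩

instance prodIsLieAbelian (K L : Type v) [LieRing K] [LieRing L]
    [IsLieAbelian K] [IsLieAbelian L] : IsLieAbelian (K × L) :=
  ⟨fun a b => by ext <;> simp [trivial_lie_zero]⟩

variable {K : Type v} [Field K] {A : Type v} [LieRing A] [LieAlgebra K A]
  [Module.Finite K A]

/-- The one-dimensional extension of `A` by a derivation `D`. -/
@[ext] structure DExt (D : LieDerivation K A A) : Type v where
  a : A
  t : K

namespace DExt
variable (D : LieDerivation K A A)

instance : Add (DExt D) := ⟨fun x y => ⟨x.a + y.a, x.t + y.t⟩⟩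
instance : Zero (DExt D) := ⟨⟨0, 0⟩⟩
instance : Neg (DExt D) := ⟨fun x => ⟨-x.a, -x.t⟩⟩
instance : SMul K (DExt D) := ⟨fun s x => ⟨s • x.a, s * x.t⟩⟩

@[simp] lemma add_a (x y : DExt D) : (x + y).a = x.a + y.a := rfl
@[simp] lemma add_t (x y : DExt D) : (x + y).t = x.t + y.t := rfl
@[simp] lemma zero_a : (0 : DExt D).a = 0 := rfl
@[simp] lemma zero_t : (0 : DExt D).t = 0 := rfl
@[simp] lemma neg_a (x : DExt D) : (-x).a = -x.a := rfl
@[simp] lemma neg_t (x : DExt D) : (-x).t = -x.t := rfl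
@[simp] lemma smul_a (s : K) (x : DExt D) : (s • x).a = s • x.a := rfl
@[simp] lemma smul_t (s : K) (x : DExt D) : (s • x).t = s * x.t := rfl

instance : AddCommGroup (DExt D) where
  add_assoc x y z := by ext <;> simp [add_assoc]
  zero_add x := by ext <;> simp
  add_zero x := by ext <;> simp
  neg_add_cancel x := by ext <;> simp
  add_comm x y := by ext <;> simp [add_comm]
  nsmul := nsmulRec
  zsmul := zsmulRec

instance : Module K (DExt D) where
  one_smul x := by ext <;> simp
  mul_smul s r x := by ext <;> simp [mul_smul, mul_assoc]
  smul_zero s := by ext <;> simp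
  smul_add s x y := by ext <;> simp [smul_add, mul_add]
  add_smul s r x := by ext <;> simp [add_smul, add_mul]
  zero_smul x := by ext <;> simp

private lemma key_leibniz (xa ya za : A) (xt yt zt : K) :
    ⁅xa, ⁅ya, za⁆ + yt • D za - zt • D ya⁆
          + xt • D (⁅ya, za⁆ + yt • D za - zt • D ya)
          - (0:K) • D xa
        = (⁅⁅xa, ya⁆ + xt • D ya - yt • D xa, za⁆
            + (0:K) • D za
            - zt • D (⁅xa, ya⁆ + xt • D ya - yt • D xa))
          + (⁅ya, ⁅xa, za⁆ + xt • D za - zt • D xa⁆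
            + yt • D (⁅xa, za⁆ + xt • D za - zt • D xa)
            - (0:K) • D ya) := by
  simp only [lie_add, lie_sub, add_lie, sub_lie, lie_smul, smul_lie, map_add, map_sub,
    map_smul, LieDerivation.apply_lie_eq_add, zero_smul, smul_add, smul_sub]
  rw [leibniz_lie xa ya za]
  linear_combination (norm := module) (-zt) • (lie_skew (D xa) ya)

instance : LieRing (DExt D) where
  bracket x y := ⟨⁅x.a, y.a⁆ + x.t • D y.a - y.t • D x.a, 0⟩
  add_lie x y z := DExt.ext
    (by show ⁅x.a + y.a, z.a⁆ + (x.t + y.t) • D z.a - z.t • D (x.a + y.a)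
          = (⁅x.a, z.a⁆ + x.t • D z.a - z.t • D x.a)
            + (⁅y.a, z.a⁆ + y.t • D z.a - z.t • D y.a)
        simp only [add_lie, add_smul, map_add, smul_add]
        module)
    (by show (0:K) = 0 + 0; simp)
  lie_add x y z := DExt.ext
    (by show ⁅x.a, y.a + z.a⁆ + x.t • D (y.a + z.a) - (y.t + z.t) • D x.a
          = (⁅x.a, y.a⁆ + x.t • D y.a - y.t • D x.a)
            + (⁅x.a, z.a⁆ + x.t • D z.a - z.t • D x.a)
        simp only [lie_add, add_smul, map_add, smul_add]
        module)
    (by show (0:K) = 0 + 0; simp)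
  lie_self x := DExt.ext
    (by show ⁅x.a, x.a⁆ + x.t • D x.a - x.t • D x.a = 0; simp)
    rfl
  leibniz_lie x y z := DExt.ext
    (key_leibniz D x.a y.a z.a x.t y.t z.t)
    (by show (0:K) = 0 + 0; simp)

@[simp] lemma lie_def (x y : DExt D) :
    ⁅x, y⁆ = DExt.mk (⁅x.a, y.a⁆ + x.t • D y.a - y.t • D x.a) 0 := rfl

instance : LieAlgebra K (DExt D) where
  lie_smul s x y := DExt.ext
    (by show ⁅x.a, s • y.a⁆ + x.t • D (s • y.a) - (s * y.t) • D x.a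
          = s • (⁅x.a, y.a⁆ + x.t • D y.a - y.t • D x.a)
        simp only [lie_smul, map_smul, smul_sub, smul_add, mul_smul]
        module)
    (by show (0:K) = s * 0; simp)

/-- The linear equivalence with `A × K`. -/
def prodLinearEquiv : DExt D ≃ₗ[K] A × K where
  toFun x := (x.a, x.t)
  invFun p := ⟨p.1, p.2⟩
  left_inv x := rfl
  right_inv p := rfl
  map_add' x y := rfl
  map_smul' s x := rfl

instance : Module.Finite K (DExt D) := Module.Finite.equiv (prodLinearEquiv D).symm

/-- The inclusion of `A`. -/
def inl : A →ₗ⁅K⁆ DExt D where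
  toFun a := ⟨a, 0⟩
  map_add' a b := by ext <;> simp
  map_smul' s a := by ext <;> simp
  map_lie' {a b} := by ext <;> simp

/-- The projection onto `K`. -/
def snd : DExt D →ₗ⁅K⁆ K where
  toFun x := x.t
  map_add' x y := rfl
  map_smul' s x := rfl
  map_lie' {x y} := by
    show (0:K) = ⁅x.t, y.t⁆
    rw [LieRing.of_associative_ring_bracket, mul_comm, sub_self]

lemma inl_injective : Function.Injective (inl D) := by
  intro a b h
  simpa [inl] using congrArg DExt.a h

lemma snd_surjective : Function.Surjective (snd D) :=
  fun s => ⟨⟨0, s⟩, rfl⟩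

lemma exactness : ∀ b : DExt D, snd D b = 0 ↔ b ∈ Set.range (inl D) := by
  intro b
  constructor
  · intro h
    have h' : b.t = 0 := h
    exact ⟨b.a, by ext <;> simp [inl, h']⟩
  · rintro ⟨a, rfl⟩
    rfl

end DExt

/-- The two-dimensional central extension of `A` by a central element `z`. -/
@[ext] structure ZExt (z : LieAlgebra.center K A) : Type v where
  a : A
  u : K
  v : K

namespace ZExt
variable (z : LieAlgebra.center K A)

lemma hz1 (b : A) : ⁅b, (z : A)⁆ = 0 := by
  have := z.2
  rw [LieModule.mem_maxTrivSubmodule] at this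
  exact this b

lemma hz2 (b : A) : ⁅(z : A), b⁆ = 0 := by
  rw [← lie_skew, hz1, neg_zero]

instance : Add (ZExt z) := ⟨fun x y => ⟨x.a + y.a, x.u + y.u, x.v + y.v⟩⟩
instance : Zero (ZExt z) := ⟨⟨0, 0, 0⟩⟩
instance : Neg (ZExt z) := ⟨fun x => ⟨-x.a, -x.u, -x.v⟩⟩
instance : SMul K (ZExt z) := ⟨fun s x => ⟨s • x.a, s * x.u, s * x.v⟩⟩

@[simp] lemma add_a (x y : ZExt z) : (x + y).a = x.a + y.a := rfl
@[simp] lemma add_u (x y : ZExt z) : (x + y).u = x.u + y.u := rfl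
@[simp] lemma add_v (x y : ZExt z) : (x + y).v = x.v + y.v := rfl
@[simp] lemma zero_a : (0 : ZExt z).a = 0 := rfl
@[simp] lemma zero_u : (0 : ZExt z).u = 0 := rfl
@[simp] lemma zero_v : (0 : ZExt z).v = 0 := rfl
@[simp] lemma neg_a (x : ZExt z) : (-x).a = -x.a := rfl
@[simp] lemma neg_u (x : ZExt z) : (-x).u = -x.u := rfl
@[simp] lemma neg_v (x : ZExt z) : (-x).v = -x.v := rfl
@[simp] lemma smul_a (s : K) (x : ZExt z) : (s • x).a = s • x.a := rfl
@[simp] lemma smul_u (s : K) (x : ZExt z) : (s • x).u = s * x.u := rfl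
@[simp] lemma smul_v (s : K) (x : ZExt z) : (s • x).v = s * x.v := rfl

instance : AddCommGroup (ZExt z) where
  add_assoc x y w := by ext <;> simp [add_assoc]
  zero_add x := by ext <;> simp
  add_zero x := by ext <;> simp
  neg_add_cancel x := by ext <;> simp
  add_comm x y := by ext <;> simp [add_comm]
  nsmul := nsmulRec
  zsmul := zsmulRec

instance : Module K (ZExt z) where
  one_smul x := by ext <;> simp
  mul_smul s r x := by ext <;> simp [mul_smul, mul_assoc]
  smul_zero s := by ext <;> simp
  smul_add s x y := by ext <;> simp [smul_add, mul_add]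
  add_smul s r x := by ext <;> simp [add_smul, add_mul]
  zero_smul x := by ext <;> simp

private lemma key_leibniz (xa ya za : A) (xu xv yu yv zu zv : K) :
    ⁅xa, ⁅ya, za⁆ + (yu * zv - yv * zu) • (z : A)⁆ + (xu * 0 - xv * 0) • (z : A)
        = (⁅⁅xa, ya⁆ + (xu * yv - xv * yu) • (z : A), za⁆ + (0 * zv - 0 * zu) • (z : A))
          + (⁅ya, ⁅xa, za⁆ + (xu * zv - xv * zu) • (z : A)⁆ + (yu * 0 - yv * 0) • (z : A)) := by
  simp only [lie_add, add_lie, lie_smul, smul_lie, hz1, hz2, smul_zero, mul_zero, zero_mul,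
    sub_zero, zero_sub, zero_smul, add_zero, neg_zero]
  rw [leibniz_lie xa ya za]

instance : LieRing (ZExt z) where
  bracket x y := ⟨⁅x.a, y.a⁆ + (x.u * y.v - x.v * y.u) • (z : A), 0, 0⟩
  add_lie x y w := ZExt.ext
    (by show ⁅x.a + y.a, w.a⁆ + ((x.u + y.u) * w.v - (x.v + y.v) * w.u) • (z : A)
          = (⁅x.a, w.a⁆ + (x.u * w.v - x.v * w.u) • (z : A))
            + (⁅y.a, w.a⁆ + (y.u * w.v - y.v * w.u) • (z : A))
        simp only [add_lie]
        module)
    (by show (0:K) = 0 + 0; simp) (by show (0:K) = 0 + 0; simp)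
  lie_add x y w := ZExt.ext
    (by show ⁅x.a, y.a + w.a⁆ + (x.u * (y.v + w.v) - x.v * (y.u + w.u)) • (z : A)
          = (⁅x.a, y.a⁆ + (x.u * y.v - x.v * y.u) • (z : A))
            + (⁅x.a, w.a⁆ + (x.u * w.v - x.v * w.u) • (z : A))
        simp only [lie_add]
        module)
    (by show (0:K) = 0 + 0; simp) (by show (0:K) = 0 + 0; simp)
  lie_self x := ZExt.ext
    (by show ⁅x.a, x.a⁆ + (x.u * x.v - x.v * x.u) • (z : A) = 0
        simp only [lie_self, zero_add]
        module)
    rfl rfl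
  leibniz_lie x y w := ZExt.ext
    (key_leibniz z x.a y.a w.a x.u x.v y.u y.v w.u w.v)
    (by show (0:K) = 0 + 0; simp) (by show (0:K) = 0 + 0; simp)

@[simp] lemma lie_def (x y : ZExt z) :
    ⁅x, y⁆ = ZExt.mk (⁅x.a, y.a⁆ + (x.u * y.v - x.v * y.u) • (z : A)) 0 0 := rfl

instance : LieAlgebra K (ZExt z) where
  lie_smul s x y := ZExt.ext
    (by show ⁅x.a, s • y.a⁆ + (x.u * (s * y.v) - x.v * (s * y.u)) • (z : A)
          = s • (⁅x.a, y.a⁆ + (x.u * y.v - x.v * y.u) • (z : A))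
        simp only [lie_smul]
        module)
    (by show (0:K) = s * 0; simp) (by show (0:K) = s * 0; simp)

/-- The linear equivalence with `A × (K × K)`. -/
def prodLinearEquiv : ZExt z ≃ₗ[K] A × K × K where
  toFun x := (x.a, x.u, x.v)
  invFun p := ⟨p.1, p.2.1, p.2.2⟩
  left_inv x := rfl
  right_inv p := rfl
  map_add' x y := rfl
  map_smul' s x := rfl

instance : Module.Finite K (ZExt z) := Module.Finite.equiv (prodLinearEquiv z).symm

/-- The inclusion of `A`. -/
def inl : A →ₗ⁅K⁆ ZExt z where
  toFun a := ⟨a, 0, 0⟩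
  map_add' a b := by ext <;> simp
  map_smul' s a := by ext <;> simp
  map_lie' {a b} := by ext <;> simp

/-- The projection onto `K × K`. -/
def proj : ZExt z →ₗ⁅K⁆ K × K where
  toFun x := (x.u, x.v)
  map_add' x y := rfl
  map_smul' s x := rfl
  map_lie' {x y} := by
    show ((0:K), (0:K)) = ⁅(x.u, x.v), (y.u, y.v)⁆
    ext <;> simp [trivial_lie_zero]

lemma inl_injective : Function.Injective (inl z) := by
  intro a b h
  simpa [inl] using congrArg ZExt.a h

lemma proj_surjective : Function.Surjective (proj z) :=
  fun s => ⟨⟨0, s.1, s.2⟩, rfl⟩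

lemma exactness : ∀ b : ZExt z, proj z b = 0 ↔ b ∈ Set.range (inl z) := by
  intro b
  constructor
  · intro h
    have h1 : b.u = 0 := congrArg Prod.fst h
    have h2 : b.v = 0 := congrArg Prod.snd h
    exact ⟨b.a, by ext <;> simp [inl, h1, h2]⟩
  · rintro ⟨a, rfl⟩
    rfl

end ZExt

/-- A Lie algebra equivalence induces a linear equivalence of centers. -/
def centerCongr {B C : Type v} [LieRing B] [LieAlgebra K B] [LieRing C] [LieAlgebra K C]
    (e : B ≃ₗ⁅K⁆ C) : LieAlgebra.center K B ≃ₗ[K] LieAlgebra.center K C where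
  toFun x := ⟨e x.1, by
    rw [LieModule.mem_maxTrivSubmodule]
    intro c
    have h := (LieModule.mem_maxTrivSubmodule K B B x.1).mp x.2
    calc ⁅c, e x.1⁆ = ⁅e (e.symm c), e x.1⁆ := by rw [e.apply_symm_apply]
      _ = e ⁅e.symm c, x.1⁆ := (e.map_lie _ _).symm
      _ = 0 := by rw [h]; exact e.toLinearEquiv.map_zero⟩
  invFun x := ⟨e.symm x.1, by
    rw [LieModule.mem_maxTrivSubmodule]
    intro b
    have h := (LieModule.mem_maxTrivSubmodule K C C x.1).mp x.2
    calc ⁅b, e.symm x.1⁆ = ⁅e.symm (e b), e.symm x.1⁆ := by rw [e.symm_apply_apply]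
      _ = e.symm ⁅e b, x.1⁆ := (e.symm.map_lie _ _).symm
      _ = 0 := by rw [h]; exact e.symm.toLinearEquiv.map_zero⟩
  left_inv x := Subtype.ext (e.symm_apply_apply x.1)
  right_inv x := Subtype.ext (e.apply_symm_apply x.1)
  map_add' x y := Subtype.ext (e.map_add x.1 y.1)
  map_smul' s x := Subtype.ext (e.map_smul s x.1)

/-- The center of `A × V` for abelian `V`. -/
def centerProd (V : Type v) [LieRing V] [LieAlgebra K V] [IsLieAbelian V] :
    LieAlgebra.center K (A × V) ≃ₗ[K] (LieAlgebra.center K A) × V where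
  toFun x := (⟨x.1.1, by
    rw [LieModule.mem_maxTrivSubmodule]
    intro b
    have h := (LieModule.mem_maxTrivSubmodule K (A × V) (A × V) x.1).mp x.2 (b, 0)
    exact congrArg Prod.fst h⟩, x.1.2)
  invFun p := ⟨(p.1.1, p.2), by
    rw [LieModule.mem_maxTrivSubmodule]
    intro y
    have h := (LieModule.mem_maxTrivSubmodule K A A p.1.1).mp p.1.2 y.1
    ext
    · exact h
    · exact trivial_lie_zero _ _ _ _⟩
  left_inv x := rfl
  right_inv p := rfl
  map_add' x y := rfl
  map_smul' s x := rfl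

/-- The center of `ZExt z` for `z ≠ 0`. -/
def centerZExt (z : LieAlgebra.center K A) (hz : (z : A) ≠ 0) :
    LieAlgebra.center K (ZExt z) ≃ₗ[K] LieAlgebra.center K A where
  toFun x := ⟨x.1.a, by
    rw [LieModule.mem_maxTrivSubmodule]
    intro b
    have h := (LieModule.mem_maxTrivSubmodule K (ZExt z) (ZExt z) x.1).mp x.2 ⟨b, 0, 0⟩
    have := congrArg ZExt.a h
    simpa using this⟩
  invFun c := ⟨⟨c.1, 0, 0⟩, by
    rw [LieModule.mem_maxTrivSubmodule]
    intro y
    have h := (LieModule.mem_maxTrivSubmodule K A A c.1).mp c.2 y.a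
    ext <;> simp [h]⟩
  left_inv x := by
    have hmem := (LieModule.mem_maxTrivSubmodule K (ZExt z) (ZExt z) x.1).mp x.2
    have hv : x.1.v = 0 := by
      have h := congrArg ZExt.a (hmem ⟨0, 1, 0⟩)
      simp at h
      rcases h with h | h
      · exact h
      · exact absurd (by simp [h]) hz
    have hu : x.1.u = 0 := by
      have h := congrArg ZExt.a (hmem ⟨0, 0, 1⟩)
      simp at h
      rcases h with h | h
      · exact h
      · exact absurd (by simp [h]) hz
    exact Subtype.ext (by ext <;> simp [hu, hv])
  right_inv c := rfl
  map_add' x y := Subtype.ext (by simp)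
  map_smul' s x := Subtype.ext (by simp)

end CompleteAux

/-- a finite-dimensional solvable Lie algebra A (char 0) such that every
short exact sequence 0 → A → B → V → 0 with V abelian splits trivially (B ≅ A ⊕ V)
is complete: Z(A) = 0 and every derivation of A is inner. -/
theorem complete_of_solvable_of_all_cocentral_split
    (K : Type u) [Field K] [CharZero K]
    (A : Type u) [LieRing A] [LieAlgebra K A] [Module.Finite K A]
    [LieAlgebra.IsSolvable A]
    (hsplit : ∀ (B V : Type u)
      [LieRing B] [LieAlgebra K B] [Module.Finite K B]
      [LieRing V] [LieAlgebra K V] [Module.Finite K V] [IsLieAbelian V]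
      (ι : A →ₗ⁅K⁆ B) (π : B →ₗ⁅K⁆ V),
      Function.Injective ι → Function.Surjective π →
      (∀ b : B, π b = 0 ↔ b ∈ Set.range ι) →
      Nonempty (B ≃ₗ⁅K⁆ A × V)) :
    LieAlgebra.center K A = ⊥ ∧
      ∀ D : LieDerivation K A A, ∃ a : A, D = LieDerivation.ad K A a := by
  classical
  have hcenter : LieAlgebra.center K A = ⊥ := by
    rw [LieSubmodule.eq_bot_iff]
    intro z0 hz0mem
    by_contra hz0
    set z : LieAlgebra.center K A := ⟨z0, hz0mem⟩ with hzdef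
    have hzne : (z : A) ≠ 0 := hz0
    obtain ⟨e⟩ := hsplit (CompleteAux.ZExt z) (K × K)
      (CompleteAux.ZExt.inl z) (CompleteAux.ZExt.proj z)
      (CompleteAux.ZExt.inl_injective z) (CompleteAux.ZExt.proj_surjective z)
      (CompleteAux.ZExt.exactness z)
    have h1 : Module.finrank K (LieAlgebra.center K (CompleteAux.ZExt z))
        = Module.finrank K (LieAlgebra.center K (A × (K × K))) :=
      (CompleteAux.centerCongr e).finrank_eq
    have h2 : Module.finrank K (LieAlgebra.center K (CompleteAux.ZExt z))
        = Module.finrank K (LieAlgebra.center K A) :=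
      (CompleteAux.centerZExt z hzne).finrank_eq
    have h3 : Module.finrank K (LieAlgebra.center K (A × (K × K)))
        = Module.finrank K (LieAlgebra.center K A) + 2 := by
      rw [(CompleteAux.centerProd (K × K)).finrank_eq, Module.finrank_prod]
      congr 1
      rw [Module.finrank_prod, Module.finrank_self]
    omega
  refine ⟨hcenter, ?_⟩
  intro D
  obtain ⟨e⟩ := hsplit (CompleteAux.DExt D) K
    (CompleteAux.DExt.inl D) (CompleteAux.DExt.snd D)
    (CompleteAux.DExt.inl_injective D) (CompleteAux.DExt.snd_surjective D)
    (CompleteAux.DExt.exactness D)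
  set x : CompleteAux.DExt D := e.symm ((0 : A), (1 : K)) with hxdef
  have hxcentral : ∀ y : CompleteAux.DExt D, ⁅y, x⁆ = 0 := by
    intro y
    have h0 : ⁅e y, ((0 : A), (1 : K))⁆ = 0 := by
      ext
      · simp
      · show ⁅(e y).2, (1:K)⁆ = 0
        rw [LieRing.of_associative_ring_bracket, mul_comm, sub_self]
    calc ⁅y, x⁆ = ⁅e.symm (e y), e.symm ((0 : A), (1 : K))⁆ := by rw [e.symm_apply_apply]
      _ = e.symm ⁅e y, ((0 : A), (1 : K))⁆ := (e.symm.map_lie _ _).symm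
      _ = 0 := by rw [h0]; exact e.symm.toLinearEquiv.map_zero
  have hxne : x ≠ 0 := by
    intro h
    have h0 : e.symm (0 : A × K) = 0 := e.symm.toLinearEquiv.map_zero
    have h1 : ((0 : A), (1 : K)) = (0 : A × K) := e.symm.injective (h.trans h0.symm)
    exact one_ne_zero (congrArg Prod.snd h1)
  have hcomp : ∀ b : A, ⁅b, x.a⁆ - x.t • D b = 0 := by
    intro b
    have h := congrArg CompleteAux.DExt.a (hxcentral ⟨b, 0⟩)
    simpa using h
  by_cases ht : x.t = 0
  · exfalso
    have hxa : x.a = 0 := by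
      have : x.a ∈ LieAlgebra.center K A := by
        rw [LieModule.mem_maxTrivSubmodule]
        intro b
        have := hcomp b
        rwa [ht, zero_smul, sub_zero] at this
      rw [hcenter, LieSubmodule.mem_bot] at this
      exact this
    exact hxne (by ext <;> simp [hxa, ht])
  · refine ⟨-(x.t⁻¹) • x.a, ?_⟩
    ext b
    have hb : x.t • D b = ⁅b, x.a⁆ := by
      have h := hcomp b
      rw [sub_eq_zero] at h
      exact h.symm
    have hDb : D b = x.t⁻¹ • ⁅b, x.a⁆ := by
      rw [← hb, inv_smul_smul₀ ht]
    calc D b = x.t⁻¹ • ⁅b, x.a⁆ := hDb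
      _ = ⁅-(x.t⁻¹) • x.a, b⁆ := by
          rw [smul_lie, ← lie_skew x.a b]
          module
      _ = (LieDerivation.ad K A (-(x.t⁻¹) • x.a)) b := by
          rw [LieDerivation.ad_apply_apply, ← lie_skew]
end

section
/- If the Lie algebra direct sum C₁ ⊕ C₂ is cocomplete, then both C₁ and C₂ are cocomplete. -/
/-- A Lie algebra `C` is *cocomplete* if every central extension
`0 → V → B → C → 0` by a (finite-dimensional) abelian Lie algebra `V`
splits trivially, i.e. `B ≅ V ⊕ C` as Lie algebras. -/
def IsCocomplete (K : Type u) [Field K] (C : Type u) [LieRing C] [LieAlgebra K C] : Prop :=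
  ∀ (V B : Type u)
    [LieRing V] [LieAlgebra K V] [Module.Finite K V] [IsLieAbelian V]
    [LieRing B] [LieAlgebra K B] [Module.Finite K B]
    (ι : V →ₗ⁅K⁆ B) (π : B →ₗ⁅K⁆ C),
    Function.Injective ι → Function.Surjective π →
    (∀ b : B, π b = 0 ↔ b ∈ Set.range ι) →
    (∀ (v : V) (b : B), ⁅ι v, b⁆ = 0) →
    Nonempty (B ≃ₗ⁅K⁆ V × C)

set_option linter.unusedVariables false

section Aux
variable {K : Type u} [Field K]
variable {L₁ L₂ L₃ L₄ L₅ L₆ : Type u}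
  [LieRing L₁] [LieAlgebra K L₁] [LieRing L₂] [LieAlgebra K L₂]
  [LieRing L₃] [LieAlgebra K L₃] [LieRing L₄] [LieAlgebra K L₄]
  [LieRing L₅] [LieAlgebra K L₅] [LieRing L₆] [LieAlgebra K L₆]

def pInl : L₁ →ₗ⁅K⁆ L₁ × L₂ where
  toFun a := (a, 0)
  map_add' a b := by ext <;> simp
  map_smul' t a := by ext <;> simp
  map_lie' {a b} := by ext <;> simp

def pInr : L₂ →ₗ⁅K⁆ L₁ × L₂ where
  toFun a := (0, a)
  map_add' a b := by ext <;> simp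
  map_smul' t a := by ext <;> simp
  map_lie' {a b} := by ext <;> simp

def pFst : L₁ × L₂ →ₗ⁅K⁆ L₁ where
  toFun p := p.1
  map_add' a b := rfl
  map_smul' t a := rfl
  map_lie' {a b} := rfl

def pSnd : L₁ × L₂ →ₗ⁅K⁆ L₂ where
  toFun p := p.2
  map_add' a b := rfl
  map_smul' t a := rfl
  map_lie' {a b} := rfl

@[simp] lemma pInl_apply (a : L₁) : (pInl (K := K) (L₂ := L₂) a) = (a, (0 : L₂)) := rfl
@[simp] lemma pInr_apply (a : L₂) : (pInr (K := K) (L₁ := L₁) a) = ((0 : L₁), a) := rfl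
@[simp] lemma pFst_apply (p : L₁ × L₂) : (pFst (K := K) p) = p.1 := rfl
@[simp] lemma pSnd_apply (p : L₁ × L₂) : (pSnd (K := K) p) = p.2 := rfl

def pMap (f : L₁ →ₗ⁅K⁆ L₃) (g : L₂ →ₗ⁅K⁆ L₄) : L₁ × L₂ →ₗ⁅K⁆ L₃ × L₄ where
  toFun p := (f p.1, g p.2)
  map_add' a b := by ext <;> simp
  map_smul' t a := by ext <;> simp
  map_lie' {a b} := by ext <;> simp

@[simp] lemma pMap_apply (f : L₁ →ₗ⁅K⁆ L₃) (g : L₂ →ₗ⁅K⁆ L₄) (p : L₁ × L₂) :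
    pMap f g p = (f p.1, g p.2) := rfl

def pCongr (e₁ : L₁ ≃ₗ⁅K⁆ L₃) (e₂ : L₂ ≃ₗ⁅K⁆ L₄) : (L₁ × L₂) ≃ₗ⁅K⁆ (L₃ × L₄) :=
  { pMap e₁.toLieHom e₂.toLieHom with
    invFun := fun p => (e₁.symm p.1, e₂.symm p.2)
    left_inv := fun p => by
      ext
      · exact e₁.symm_apply_apply p.1
      · exact e₂.symm_apply_apply p.2
    right_inv := fun p => by
      ext
      · exact e₁.apply_symm_apply p.1
      · exact e₂.apply_symm_apply p.2 }

@[simp] lemma pCongr_apply (e₁ : L₁ ≃ₗ⁅K⁆ L₃) (e₂ : L₂ ≃ₗ⁅K⁆ L₄) (p : L₁ × L₂) :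
    pCongr e₁ e₂ p = (e₁ p.1, e₂ p.2) := rfl
@[simp] lemma pCongr_symm_apply (e₁ : L₁ ≃ₗ⁅K⁆ L₃) (e₂ : L₂ ≃ₗ⁅K⁆ L₄) (p : L₃ × L₄) :
    (pCongr e₁ e₂).symm p = (e₁.symm p.1, e₂.symm p.2) := rfl

def pComm : (L₁ × L₂) ≃ₗ⁅K⁆ (L₂ × L₁) where
  toFun p := (p.2, p.1)
  invFun p := (p.2, p.1)
  left_inv p := rfl
  right_inv p := rfl
  map_add' a b := rfl
  map_smul' t a := rfl
  map_lie' {a b} := rfl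

def pAssoc : ((L₁ × L₂) × L₃) ≃ₗ⁅K⁆ (L₁ × (L₂ × L₃)) where
  toFun p := (p.1.1, (p.1.2, p.2))
  invFun p := ((p.1, p.2.1), p.2.2)
  left_inv p := rfl
  right_inv p := rfl
  map_add' a b := rfl
  map_smul' t a := rfl
  map_lie' {a b} := rfl

@[simp] lemma pAssoc_apply (p : (L₁ × L₂) × L₃) :
    (pAssoc (K := K) p) = (p.1.1, (p.1.2, p.2)) := rfl
@[simp] lemma pAssoc_symm_apply (p : L₁ × (L₂ × L₃)) :
    ((pAssoc (K := K)).symm p) = ((p.1, p.2.1), p.2.2) := rfl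
@[simp] lemma pComm_apply (p : L₁ × L₂) : (pComm (K := K) p) = (p.2, p.1) := rfl

open Module in
noncomputable def lieEquivOfInjOfFinrankEq [Module.Finite K L₁] [Module.Finite K L₂]
    (f : L₁ →ₗ⁅K⁆ L₂) (hf : Function.Injective f)
    (h : finrank K L₁ = finrank K L₂) : L₁ ≃ₗ⁅K⁆ L₂ :=
  LieEquiv.ofBijective f
    ⟨hf, (LinearMap.injective_iff_surjective_of_finrank_eq_finrank h).mp hf⟩


open Module in
lemma cancel_of_inj {Z M X : Type u}
    [LieRing Z] [LieAlgebra K Z] [Module.Finite K Z]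
    [LieRing M] [LieAlgebra K M] [Module.Finite K M]
    [LieRing X] [LieAlgebra K X] [Module.Finite K X]
    (e : (M × Z) ≃ₗ⁅K⁆ (X × Z))
    (hD : Function.Injective fun t : Z => (e ((0 : M), (e.symm ((0 : X), t)).2)).2) :
    Nonempty (M ≃ₗ⁅K⁆ X) := by
  have hfr : finrank K M = finrank K X := by
    have h1 : finrank K (M × Z) = finrank K (X × Z) := e.toLinearEquiv.finrank_eq
    rw [Module.finrank_prod, Module.finrank_prod] at h1
    omega
  set θ : M →ₗ⁅K⁆ X := pFst.comp (e.toLieHom.comp pInl) with hθdef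
  have hθ : ∀ w : M, θ w = 0 → w = 0 := by
    intro w hw
    have hw1 : (e (w, (0 : Z))).1 = 0 := hw
    have h1 : e (w, (0 : Z)) = ((0 : X), (e (w, (0 : Z))).2) := Prod.ext hw1 rfl
    set t := (e (w, (0 : Z))).2 with ht
    have h2 : e.symm ((0 : X), t) = (w, 0) := by
      rw [← h1]; exact e.symm_apply_apply _
    have h3 : (e.symm ((0 : X), t)).2 = 0 := by rw [h2]
    have h40 : e.symm ((0:X), (0:Z)) = 0 := by
      have h0 : ((0:X), (0:Z)) = (0 : X × Z) := rfl
      rw [h0]; exact e.symm.map_zero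
    have hL : (e ((0:M), (e.symm ((0:X), t)).2)).2 = (e ((0:M), (0:Z))).2 := by rw [h3]
    have hR : (e ((0:M), (e.symm ((0:X), (0:Z))).2)).2 = (e ((0:M), (0:Z))).2 := by
      rw [h40]; rfl
    have h5 : t = 0 := hD (hL.trans hR.symm)
    rw [h5, h40] at h2
    simpa using (congrArg Prod.fst h2).symm
  have hinj : Function.Injective θ := by
    intro a b hab
    have h0 : θ.toLinearMap (a - b) = 0 := by
      rw [map_sub]; exact sub_eq_zero.mpr hab
    exact sub_eq_zero.mp (hθ _ h0)
  exact ⟨lieEquivOfInjOfFinrankEq θ hinj hfr⟩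


open Module in
lemma cancel_prod : ∀ (n : ℕ) {Z M X : Type u}
    [LieRing Z] [LieAlgebra K Z] [Module.Finite K Z]
    [LieRing M] [LieAlgebra K M] [Module.Finite K M]
    [LieRing X] [LieAlgebra K X] [Module.Finite K X],
    finrank K Z = n → ((M × Z) ≃ₗ⁅K⁆ (X × Z)) → Nonempty (M ≃ₗ⁅K⁆ X) := by
  intro n
  induction n using Nat.strong_induction_on with
  | _ n ih =>
  intro Z M X _iZ1 _iZ2 _iZ3 _iM1 _iM2 _iM3 _iX1 _iX2 _iX3 hZn e
  classical
  set mm : Z →ₗ⁅K⁆ M := pFst.comp (e.symm.toLieHom.comp pInr) with hmmdef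
  set zz : Z →ₗ⁅K⁆ Z := pSnd.comp (e.symm.toLieHom.comp pInr) with hzzdef
  set g1 : M →ₗ⁅K⁆ Z := pSnd.comp (e.toLieHom.comp pInl) with hg1def
  set ze : Z →ₗ⁅K⁆ Z := pSnd.comp (e.toLieHom.comp pInr) with hzedef
  set D : Z →ₗ⁅K⁆ Z := ze.comp zz with hDdef
  have hmm_ap : ∀ t : Z, mm t = (e.symm ((0:X), t)).1 := fun t => rfl
  have hzz_ap : ∀ t : Z, zz t = (e.symm ((0:X), t)).2 := fun t => rfl
  have hg1_ap : ∀ w : M, g1 w = (e (w, (0:Z))).2 := fun w => rfl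
  have hD_ap : ∀ t : Z, D t = (e ((0:M), zz t)).2 := fun t => rfl
  have hsymm_pair : ∀ t : Z, e.symm ((0:X), t) = (mm t, zz t) := fun t => rfl
  have hg1add : ∀ a b : M, g1 (a + b) = g1 a + g1 b := fun a b => g1.toLinearMap.map_add a b
  have hg1sub : ∀ a b : M, g1 (a - b) = g1 a - g1 b := fun a b => g1.toLinearMap.map_sub a b
  have hg1smul : ∀ (c : K) (a : M), g1 (c • a) = c • g1 a := fun c a => g1.toLinearMap.map_smul c a
  have hg1zero : g1 (0 : M) = 0 := g1.toLinearMap.map_zero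
  have hmmadd : ∀ a b : Z, mm (a + b) = mm a + mm b := fun a b => mm.toLinearMap.map_add a b
  have hmmsmul : ∀ (c : K) (a : Z), mm (c • a) = c • mm a := fun c a => mm.toLinearMap.map_smul c a
  have hmmzero : mm (0 : Z) = 0 := mm.toLinearMap.map_zero
  have hrel : ∀ t : Z, t = g1 (mm t) + D t := by
    intro t
    have h1 : ((0:X), t) = e (mm t, zz t) := by
      rw [← hsymm_pair]; exact (e.apply_symm_apply _).symm
    have h2 : ((mm t, zz t) : M × Z) = (mm t, (0:Z)) + ((0:M), zz t) := by ext <;> simp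
    have h3 : ((0:X), t) = e (mm t, 0) + e (0, zz t) := by
      have hadd := e.toLieHom.map_add ((mm t, (0:Z)) : M × Z) (((0:M), zz t) : M × Z)
      rw [h1, h2]
      exact hadd
    have h4 := congrArg Prod.snd h3
    simp only [Prod.snd_add] at h4
    exact h4
  have hGD : ∀ s t : Z, ⁅g1 (mm s), D t⁆ = 0 := by
    intro s t
    have h0 : ⁅((mm s, (0:Z)) : M × Z), ((0:M), zz t)⁆ = 0 := by ext <;> simp
    have h1 : ⁅e (mm s, (0:Z)), e ((0:M), zz t)⁆ = 0 :=
      calc ⁅e (mm s, (0:Z)), e ((0:M), zz t)⁆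
          = e ⁅((mm s, (0:Z)) : M × Z), (((0:M), zz t) : M × Z)⁆ :=
            (e.toLieHom.map_lie _ _).symm
        _ = 0 := by rw [h0]; exact e.toLieHom.map_zero
    have h2 := congrArg Prod.snd h1
    simp at h2; exact h2
  have hcent : ∀ s t : Z, ⁅D s, t⁆ = D ⁅s, t⁆ := by
    intro s t
    conv_lhs => rw [hrel t]
    rw [lie_add]
    have h1 : ⁅D s, g1 (mm t)⁆ = 0 := by
      rw [← lie_skew, hGD t s, neg_zero]
    rw [h1, zero_add]
    exact (D.map_lie s t).symm
  have hcent' : ∀ s t : Z, ⁅s, D t⁆ = D ⁅s, t⁆ := by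
    intro s t
    conv_lhs => rw [hrel s]
    rw [add_lie, hGD s t, zero_add]
    exact (D.map_lie s t).symm
  by_cases hinj : Function.Injective (D : Z → Z)
  · exact cancel_of_inj e hinj
  by_cases hnil : (D.toLinearMap ^ n) = 0
  · -- D nilpotent: build an automorphism s of M × Z and reduce to the injective case
    set A : Z →ₗ⁅K⁆ Z := g1.comp mm with hAdef
    have hA_ap : ∀ t : Z, A t = g1 (mm t) := fun t => rfl
    have hAt : ∀ t : Z, A t = t - D t := fun t => eq_sub_of_add_eq (hrel t).symm
    have hAl : A.toLinearMap = 1 - D.toLinearMap := by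
      ext t
      simp only [LinearMap.sub_apply, Module.End.one_apply]
      exact hAt t
    have hAu : IsUnit A.toLinearMap := by
      rw [hAl]; exact IsNilpotent.isUnit_one_sub ⟨n, hnil⟩
    obtain ⟨u, hu⟩ := hAu
    set Ai : Z →ₗ[K] Z := ((u⁻¹ : (Module.End K Z)ˣ) : Module.End K Z) with hAidef
    have hAiA : ∀ t : Z, Ai (A t) = t := by
      intro t
      have h2 : A t = ((u : Module.End K Z)) t := by rw [hu]; rfl
      rw [h2]
      calc Ai (((u : Module.End K Z)) t)
          = ((↑u⁻¹ * ↑u : Module.End K Z)) t := rfl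
        _ = ((1 : Module.End K Z)) t := by rw [u.inv_mul]
        _ = t := rfl
    have hAAi : ∀ t : Z, A (Ai t) = t := by
      intro t
      have h2 : A (Ai t) = ((u : Module.End K Z)) (Ai t) := by rw [hu]; rfl
      rw [h2]
      calc ((u : Module.End K Z)) (Ai t)
          = ((↑u * ↑u⁻¹ : Module.End K Z)) t := rfl
        _ = ((1 : Module.End K Z)) t := by rw [u.mul_inv]
        _ = t := rfl
    have hminj : ∀ t : Z, mm t = 0 → t = 0 := by
      intro t h0
      have h1 : A t = 0 := by rw [hA_ap, h0, hg1zero]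
      have h2 := congrArg Ai h1
      rw [hAiA, Ai.map_zero] at h2
      exact h2
    have k1 : ∀ (w : M) (t : Z), g1 w = 0 → ⁅w, mm t⁆ = 0 := by
      intro w t hgw
      have hsnd : (e (w, (0:Z))).2 = 0 := hgw
      have h0 : e ⁅((w, (0:Z)) : M × Z), e.symm ((0:X), t)⁆ = 0 := by
        calc e ⁅((w, (0:Z)) : M × Z), e.symm ((0:X), t)⁆
            = ⁅e (w, (0:Z)), e (e.symm ((0:X), t))⁆ := e.toLieHom.map_lie _ _
          _ = ⁅e (w, (0:Z)), ((0:X), t)⁆ := by rw [e.apply_symm_apply]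
          _ = 0 := by
              ext
              · simp
              · show ⁅(e (w, (0:Z))).2, t⁆ = 0
                rw [hsnd, zero_lie]
      have h1 : ⁅((w, (0:Z)) : M × Z), e.symm ((0:X), t)⁆ = 0 := by
        apply e.injective
        show e ⁅((w, (0:Z)) : M × Z), e.symm ((0:X), t)⁆ = e 0
        rw [h0]
        exact e.toLieHom.map_zero.symm
      have h2 := congrArg Prod.fst h1
      rw [hsymm_pair] at h2
      simpa using h2
    have hg1mm : ∀ t : Z, g1 (mm t) = A t := fun t => rfl
    have hg1a : ∀ w : M, g1 (w - mm (Ai (g1 w))) = 0 := by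
      intro w
      rw [hg1sub]
      rw [hg1mm, hAAi, sub_self]
    have hii : ∀ w w' : M, Ai (g1 ⁅w, w'⁆) = ⁅Ai (g1 w), Ai (g1 w')⁆ := by
      intro w w'
      have h1 : g1 ⁅w, w'⁆ = ⁅g1 w, g1 w'⁆ := g1.map_lie w w'
      have h2 : g1 w = A (Ai (g1 w)) := (hAAi _).symm
      have h3 : g1 w' = A (Ai (g1 w')) := (hAAi _).symm
      conv_lhs => rw [h1, h2, h3, ← A.map_lie]
      rw [hAiA]
    set σf : M × Z → M × Z := fun p => (p.1 - mm (Ai (g1 p.1)) + mm p.2, Ai (g1 p.1)) with hσf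
    have hbr : ∀ w w' : M,
        ⁅w, w'⁆ = ⁅w - mm (Ai (g1 w)), w' - mm (Ai (g1 w'))⁆ + mm ⁅Ai (g1 w), Ai (g1 w')⁆ := by
      intro w w'
      have hw : w = (w - mm (Ai (g1 w))) + mm (Ai (g1 w)) := by abel
      have hw' : w' = (w' - mm (Ai (g1 w'))) + mm (Ai (g1 w')) := by abel
      calc ⁅w, w'⁆ = ⁅(w - mm (Ai (g1 w))) + mm (Ai (g1 w)),
              (w' - mm (Ai (g1 w'))) + mm (Ai (g1 w'))⁆ := by rw [← hw, ← hw']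
        _ = ⁅w - mm (Ai (g1 w)), w' - mm (Ai (g1 w'))⁆
            + ⁅w - mm (Ai (g1 w)), mm (Ai (g1 w'))⁆
            + (⁅mm (Ai (g1 w)), w' - mm (Ai (g1 w'))⁆
            + ⁅mm (Ai (g1 w)), mm (Ai (g1 w'))⁆) := by
              rw [add_lie, lie_add, lie_add]
        _ = ⁅w - mm (Ai (g1 w)), w' - mm (Ai (g1 w'))⁆ + mm ⁅Ai (g1 w), Ai (g1 w')⁆ := by
              rw [k1 _ _ (hg1a w)]
              rw [show ⁅mm (Ai (g1 w)), w' - mm (Ai (g1 w'))⁆ = 0 by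
                rw [← lie_skew, k1 _ _ (hg1a w'), neg_zero]]
              rw [← mm.map_lie]
              abel
    have hσlie : ∀ x y : M × Z, σf ⁅x, y⁆ = ⁅σf x, σf y⁆ := by
      intro x y
      have hxa : g1 (x.1 - mm (Ai (g1 x.1))) = 0 := hg1a x.1
      have hya : g1 (y.1 - mm (Ai (g1 y.1))) = 0 := hg1a y.1
      ext
      · show ⁅x.1, y.1⁆ - mm (Ai (g1 ⁅x.1, y.1⁆)) + mm ⁅x.2, y.2⁆
            = ⁅x.1 - mm (Ai (g1 x.1)) + mm x.2, y.1 - mm (Ai (g1 y.1)) + mm y.2⁆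
        rw [add_lie, lie_add, lie_add]
        rw [k1 _ _ hxa]
        rw [show ⁅mm x.2, y.1 - mm (Ai (g1 y.1))⁆ = 0 by
          rw [← lie_skew, k1 _ _ hya, neg_zero]]
        rw [← mm.map_lie]
        rw [hii x.1 y.1, hbr x.1 y.1]
        abel
      · show Ai (g1 ⁅x.1, y.1⁆) = ⁅Ai (g1 x.1), Ai (g1 y.1)⁆
        exact hii x.1 y.1
    have hσσ : ∀ p : M × Z, σf (σf p) = p := by
      intro p
      have hg1w1 : g1 (p.1 - mm (Ai (g1 p.1)) + mm p.2) = A p.2 := by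
        rw [hg1add]
        rw [hg1a p.1, zero_add, hg1mm]
      ext
      · show (p.1 - mm (Ai (g1 p.1)) + mm p.2)
            - mm (Ai (g1 (p.1 - mm (Ai (g1 p.1)) + mm p.2))) + mm (Ai (g1 p.1)) = p.1
        rw [hg1w1, hAiA]
        abel
      · show Ai (g1 (p.1 - mm (Ai (g1 p.1)) + mm p.2)) = p.2
        rw [hg1w1, hAiA]
    set σ : (M × Z) →ₗ⁅K⁆ (M × Z) :=
      { toFun := σf
        map_add' := by
          intro p q
          ext
          · show (p.1 + q.1) - mm (Ai (g1 (p.1 + q.1))) + mm (p.2 + q.2)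
                = (p.1 - mm (Ai (g1 p.1)) + mm p.2) + (q.1 - mm (Ai (g1 q.1)) + mm q.2)
            rw [hg1add, Ai.map_add, hmmadd, hmmadd]
            abel
          · show Ai (g1 (p.1 + q.1)) = Ai (g1 p.1) + Ai (g1 q.1)
            rw [hg1add, Ai.map_add]
        map_smul' := by
          intro c p
          ext
          · show (c • p.1) - mm (Ai (g1 (c • p.1))) + mm (c • p.2)
                = c • (p.1 - mm (Ai (g1 p.1)) + mm p.2)
            rw [hg1smul, Ai.map_smul, hmmsmul, hmmsmul, smul_add, smul_sub]
          · show Ai (g1 (c • p.1)) = c • Ai (g1 p.1)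
            rw [hg1smul, Ai.map_smul]
        map_lie' := by intro x y; exact hσlie x y } with hσdef
    set s : (M × Z) ≃ₗ⁅K⁆ (M × Z) :=
      { σ with
        invFun := σf
        left_inv := hσσ
        right_inv := hσσ } with hsdef
    set e' : (M × Z) ≃ₗ⁅K⁆ (X × Z) := s.trans e with he'def
    have hs_ap : ∀ p : M × Z, s p = σf p := fun p => rfl
    have hs_symm_ap : ∀ p : M × Z, s.symm p = σf p := fun p => rfl
    have hstep1 : ∀ t : Z, (e'.symm ((0:X), t)).2 = t := by
      intro t
      have h1 : e'.symm ((0:X), t) = s.symm (e.symm ((0:X), t)) := rfl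
      rw [h1, hsymm_pair, hs_symm_ap]
      show Ai (g1 (mm t)) = t
      rw [hg1mm, hAiA]
    have hstep2 : ∀ t : Z, (e' ((0:M), t)).2 = A t := by
      intro t
      have h1 : e' ((0:M), t) = e (σf ((0:M), t)) := rfl
      have h2 : σf ((0:M), t) = (mm t, (0:Z)) := by
        ext
        · show (0:M) - mm (Ai (g1 (0:M))) + mm t = mm t
          rw [hg1zero, Ai.map_zero, hmmzero]
          abel
        · show Ai (g1 (0:M)) = 0
          rw [hg1zero, Ai.map_zero]
      rw [h1, h2]
      rfl
    apply cancel_of_inj e'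
    intro t t' htt'
    simp only [hstep1, hstep2] at htt'
    have h3 := congrArg Ai htt'
    rw [hAiA, hAiA] at h3
    exact h3
  · -- D neither injective nor nilpotent: Fitting decomposition and induction
    obtain ⟨a, b, hab, hne⟩ := Function.not_injective_iff.mp hinj
    haveI hZnt : Nontrivial Z := ⟨a, b, hne⟩
    have hnpos : 0 < n := hZn ▸ finrank_pos
    set Dl : Module.End K Z := D.toLinearMap with hDldef
    have hDl_ap : ∀ t : Z, Dl t = D t := fun t => rfl
    have hpow : ∀ (k : ℕ) (s t : Z), ⁅(Dl ^ k) s, t⁆ = (Dl ^ k) ⁅s, t⁆ := by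
      intro k
      induction k with
      | zero => intro s t; simp
      | succ k ihk =>
        intro s t
        rw [pow_succ', Module.End.mul_apply, Module.End.mul_apply]
        calc ⁅Dl ((Dl ^ k) s), t⁆ = D ⁅(Dl ^ k) s, t⁆ := hcent _ t
          _ = D ((Dl ^ k) ⁅s, t⁆) := by rw [ihk s t]
          _ = Dl ((Dl ^ k) ⁅s, t⁆) := rfl
    have hpow' : ∀ (k : ℕ) (s t : Z), ⁅s, (Dl ^ k) t⁆ = (Dl ^ k) ⁅s, t⁆ := by
      intro k
      induction k with
      | zero => intro s t; simp
      | succ k ihk =>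
        intro s t
        rw [pow_succ', Module.End.mul_apply, Module.End.mul_apply]
        calc ⁅s, Dl ((Dl ^ k) t)⁆ = D ⁅s, (Dl ^ k) t⁆ := hcent' s _
          _ = D ((Dl ^ k) ⁅s, t⁆) := by rw [ihk s t]
          _ = Dl ((Dl ^ k) ⁅s, t⁆) := rfl
    set f : Module.End K Z := Dl ^ n with hfdef
    set Z₀ : LieSubalgebra K Z :=
      { LinearMap.ker f with
        lie_mem' := fun {x y} hx hy => by
          have hx' : f x = 0 := hx
          show f ⁅x, y⁆ = 0
          rw [← hpow n x y, hx', zero_lie] } with hZ₀def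
    set Z₁ : LieSubalgebra K Z :=
      { LinearMap.range f with
        lie_mem' := fun {x y} hx hy => by
          obtain ⟨a', ha'⟩ := hx
          show ∃ c, f c = ⁅x, y⁆
          exact ⟨⁅a', y⁆, by rw [← hpow n a' y, ha']⟩ } with hZ₁def
    haveI : Module.Finite K Z₀ := inferInstanceAs (Module.Finite K (LinearMap.ker f))
    haveI : Module.Finite K Z₁ := inferInstanceAs (Module.Finite K (LinearMap.range f))
    have hker_stab : LinearMap.ker (Dl ^ (n + n)) = LinearMap.ker f := by
      have h1 := Module.End.ker_pow_eq_ker_pow_finrank_of_le (f := Dl) (m := n + n)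
        (by rw [hZn]; omega)
      have h2 := Module.End.ker_pow_eq_ker_pow_finrank_of_le (f := Dl) (m := n)
        (by rw [hZn])
      rw [h1, ← h2]
    have hdisj : ∀ x : Z, f x = 0 → x ∈ LinearMap.range f → x = 0 := by
      intro x hx hr
      obtain ⟨w, hw⟩ := hr
      have h1 : (Dl ^ (n + n)) w = 0 := by
        rw [pow_add, Module.End.mul_apply, hw]
        exact hx
      have h2 : f w = 0 := by
        have := hker_stab ▸ (LinearMap.mem_ker.mpr h1)
        exact LinearMap.mem_ker.mp this
      rw [← hw, h2]
    have hcross : ∀ a' b' : Z, f a' = 0 → ⁅a', f b'⁆ = 0 := by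
      intro a' b' ha'
      rw [hpow' n a' b', ← hpow n a' b', ha', zero_lie]
    set τ : (↥Z₀ × ↥Z₁) →ₗ⁅K⁆ Z :=
      { toFun := fun p => (p.1 : Z) + (p.2 : Z)
        map_add' := fun p q => by
          show ((p.1 : Z) + (q.1 : Z)) + ((p.2 : Z) + (q.2 : Z))
              = ((p.1 : Z) + (p.2 : Z)) + ((q.1 : Z) + (q.2 : Z))
          abel
        map_smul' := fun c p => by
          show (c • (p.1 : Z)) + (c • (p.2 : Z)) = c • ((p.1 : Z) + (p.2 : Z))
          rw [smul_add]
        map_lie' := fun {p q} => by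
          show ((⁅p.1, q.1⁆ : Z₀) : Z) + ((⁅p.2, q.2⁆ : Z₁) : Z) = ⁅(p.1 : Z) + p.2, (q.1 : Z) + q.2⁆
          rw [LieSubalgebra.coe_bracket, LieSubalgebra.coe_bracket]
          rw [add_lie, lie_add, lie_add]
          obtain ⟨bq, hbq⟩ := q.2.2
          obtain ⟨bp, hbp⟩ := p.2.2
          have hc1 : ⁅(p.1 : Z), (q.2 : Z)⁆ = 0 := by
            rw [← hbq]; exact hcross _ _ p.1.2
          have hc2 : ⁅(p.2 : Z), (q.1 : Z)⁆ = 0 := by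
            rw [← lie_skew]
            rw [show ⁅(q.1 : Z), (p.2 : Z)⁆ = 0 by rw [← hbp]; exact hcross _ _ q.1.2]
            rw [neg_zero]
          rw [hc1, hc2]
          abel } with hτdef
    have hτinj : Function.Injective τ := by
      have hker : ∀ p : ↥Z₀ × ↥Z₁, τ p = 0 → p = 0 := by
        intro p hp
        have hp' : (p.1 : Z) + (p.2 : Z) = 0 := hp
        have h1 : (p.1 : Z) = -(p.2 : Z) := eq_neg_of_add_eq_zero_left hp'
        have h2 : (p.1 : Z) ∈ LinearMap.range f := by
          rw [h1]
          exact Submodule.neg_mem _ p.2.2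
        have h3 : (p.1 : Z) = 0 := hdisj _ p.1.2 h2
        have h4 : (p.2 : Z) = 0 := by
          have := hp'
          rw [h3, zero_add] at this
          exact this
        ext
        · exact h3
        · exact h4
      intro p q hpq
      have h0 : τ (p - q) = 0 := by
        show τ.toLinearMap (p - q) = 0
        rw [map_sub]
        show τ p - τ q = 0
        rw [hpq, sub_self]
      have := hker _ h0
      rwa [sub_eq_zero] at this
    have hfinsum : finrank K ↥Z₀ + finrank K ↥Z₁ = n := by
      have h0 : finrank K ↥Z₀ = finrank K (LinearMap.ker f) := rfl
      have h1 : finrank K ↥Z₁ = finrank K (LinearMap.range f) := rfl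
      have h2 := LinearMap.finrank_range_add_finrank_ker f
      rw [hZn] at h2
      rw [h0, h1]
      omega
    have hfin : finrank K (↥Z₀ × ↥Z₁) = finrank K Z := by
      rw [Module.finrank_prod, hZn]
      exact hfinsum
    set τe : (↥Z₀ × ↥Z₁) ≃ₗ⁅K⁆ Z := lieEquivOfInjOfFinrankEq τ hτinj hfin with hτedef
    have hn1pos : 0 < finrank K ↥Z₁ := by
      have hne0 : f ≠ 0 := hnil
      obtain ⟨x, hx⟩ : ∃ x : Z, f x ≠ 0 := by
        by_contra hcon
        push_neg at hcon
        exact hne0 (LinearMap.ext hcon)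
      haveI : Nontrivial ↥Z₁ := by
        refine ⟨⟨f x, ⟨x, rfl⟩⟩, 0, ?_⟩
        intro hcon
        exact hx (by simpa using congrArg (fun y : ↥Z₁ => (y : Z)) hcon)
      exact finrank_pos
    have hn0pos : 0 < finrank K ↥Z₀ := by
      have hc : D (a - b) = 0 := by
        show D.toLinearMap (a - b) = 0
        rw [map_sub]
        show D a - D b = 0
        rw [hab, sub_self]
      have hfc : f (a - b) = 0 := by
        have hn' : n = (n - 1) + 1 := by omega
        rw [hfdef, hn', pow_succ, Module.End.mul_apply]
        rw [show Dl (a - b) = 0 from hc, (Dl ^ (n-1)).map_zero]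
      haveI : Nontrivial ↥Z₀ := by
        refine ⟨⟨a - b, hfc⟩, 0, ?_⟩
        intro hcon
        have hh := congrArg (fun y : ↥Z₀ => (y : Z)) hcon
        simp only [ZeroMemClass.coe_zero] at hh
        exact hne (by rwa [sub_eq_zero] at hh)
      exact finrank_pos
    have hn0lt : finrank K ↥Z₀ < n := by omega
    have hn1lt : finrank K ↥Z₁ < n := by omega
    set e₁ : ((M × ↥Z₀) × ↥Z₁) ≃ₗ⁅K⁆ ((X × ↥Z₀) × ↥Z₁) :=
      pAssoc.trans ((pCongr (LieEquiv.refl) τe).trans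
        (e.trans ((pCongr (LieEquiv.refl) τe.symm).trans pAssoc.symm))) with he₁def
    obtain ⟨e₂⟩ := ih (finrank K ↥Z₁) hn1lt rfl e₁
    exact ih (finrank K ↥Z₀) hn0lt rfl e₂

end Aux

/-- if the direct sum C₁ ⊕ C₂ is cocomplete then both C₁ and C₂ are
cocomplete. -/
theorem cocomplete_summands_of_cocomplete_prod
    (K : Type u) [Field K] [CharZero K]
    (C₁ C₂ : Type u)
    [LieRing C₁] [LieAlgebra K C₁] [Module.Finite K C₁]
    [LieRing C₂] [LieAlgebra K C₂] [Module.Finite K C₂]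
    (h : IsCocomplete K (C₁ × C₂)) :
    IsCocomplete K C₁ ∧ IsCocomplete K C₂ := by
  constructor
  · intro V B _ _ _ _ _ _ _ ι π hι hπ hexact hcentral
    have hmain := h V (B × C₂) (pInl.comp ι) (pMap π (LieHom.id))
      (by
        intro v w hvw
        have h1 : (ι v, (0:C₂)) = (ι w, (0:C₂)) := hvw
        exact hι (congrArg Prod.fst h1))
      (by
        rintro ⟨c₁, c₂⟩
        obtain ⟨b, hb⟩ := hπ c₁
        exact ⟨(b, c₂), by ext <;> simp [hb]⟩)
      (by
        rintro ⟨b, c⟩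
        constructor
        · intro h0
          have h1 : π b = 0 := congrArg Prod.fst h0
          have h2 : c = 0 := congrArg Prod.snd h0
          obtain ⟨v, hv⟩ := (hexact b).mp h1
          exact ⟨v, by rw [h2, ← hv]; rfl⟩
        · rintro ⟨v, hv⟩
          have h1 : (ι v, (0:C₂)) = (b, c) := hv
          have h3 : ι v = b := congrArg Prod.fst h1
          have h2 : π b = 0 := by
            rw [← h3]
            exact (hexact (ι v)).mpr ⟨v, rfl⟩
          ext
          · exact h2
          · exact (congrArg Prod.snd h1).symm)
      (by
        rintro v ⟨b, c⟩
        ext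
        · exact hcentral v b
        · simp)
    obtain ⟨e⟩ := hmain
    have e2 : (B × C₂) ≃ₗ⁅K⁆ ((V × C₁) × C₂) := e.trans pAssoc.symm
    exact cancel_prod (Module.finrank K C₂) rfl e2
  · intro V B _ _ _ _ _ _ _ ι π hι hπ hexact hcentral
    have hmain := h V (C₁ × B) (pInr.comp ι) (pMap (LieHom.id) π)
      (by
        intro v w hvw
        have h1 : ((0:C₁), ι v) = ((0:C₁), ι w) := hvw
        exact hι (congrArg Prod.snd h1))
      (by
        rintro ⟨c₁, c₂⟩
        obtain ⟨b, hb⟩ := hπ c₂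
        exact ⟨(c₁, b), by ext <;> simp [hb]⟩)
      (by
        rintro ⟨c, b⟩
        constructor
        · intro h0
          have h1 : c = 0 := congrArg Prod.fst h0
          have h2 : π b = 0 := congrArg Prod.snd h0
          obtain ⟨v, hv⟩ := (hexact b).mp h2
          exact ⟨v, by rw [h1, ← hv]; rfl⟩
        · rintro ⟨v, hv⟩
          have h1 : ((0:C₁), ι v) = (c, b) := hv
          have h3 : ι v = b := congrArg Prod.snd h1
          have h2 : π b = 0 := by
            rw [← h3]
            exact (hexact (ι v)).mpr ⟨v, rfl⟩
          ext
          · exact (congrArg Prod.fst h1).symm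
          · exact h2)
      (by
        rintro v ⟨c, b⟩
        ext
        · simp
        · exact hcentral v b)
    obtain ⟨e⟩ := hmain
    have e2 : (B × C₁) ≃ₗ⁅K⁆ ((V × C₂) × C₁) :=
      pComm.trans (e.trans ((pCongr (LieEquiv.refl) pComm).trans pAssoc.symm))
    exact cancel_prod (Module.finrank K C₁) rfl e2
end

section
/- If the direct sum C₁ ⊕ C₂ of two finite-dimensional Lie algebras satisfies H²(C₁ ⊕ C₂, K) = 0, then H²(C₁, K) = 0, H²(C₂, K) = 0, and moreover C₁ = [C₁, C₁] or C₂ = [C₂, C₂] (at least one summand is perfect). -/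
section LieH2
variable (K : Type*) [Field K] (L : Type*) [LieRing L] [LieAlgebra K L]

/-- The space of 2-cocycles on `L` with trivial coefficients `K`: alternating bilinear
forms `f` satisfying the cocycle identity
`f(⁅x,y⁆, z) + f(⁅y,z⁆, x) + f(⁅z,x⁆, y) = 0`. -/
def lieZ2 : Submodule K (L →ₗ[K] L →ₗ[K] K) where
  carrier := {f | (∀ x : L, f x x = 0) ∧
    ∀ x y z : L, f ⁅x, y⁆ z + f ⁅y, z⁆ x + f ⁅z, x⁆ y = 0}
  add_mem' := by
    intro f g hf hg
    refine ⟨fun x => by simp [hf.1 x, hg.1 x], fun x y z => ?_⟩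
    have h1 := hf.2 x y z
    have h2 := hg.2 x y z
    simp only [LinearMap.add_apply]
    linear_combination h1 + h2
  zero_mem' := by exact ⟨fun x => rfl, fun x y z => by simp⟩
  smul_mem' := by
    intro t f hf
    refine ⟨fun x => by simp [hf.1 x], fun x y z => ?_⟩
    have h1 := hf.2 x y z
    simp only [LinearMap.smul_apply, smul_eq_mul]
    linear_combination t * h1

/-- The coboundary map sending a linear form `g` on `L` to the 2-coboundary
`(x, y) ↦ g ⁅x, y⁆`. -/
def lieD1 : (L →ₗ[K] K) →ₗ[K] (L →ₗ[K] L →ₗ[K] K) where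
  toFun g := LinearMap.mk₂ K (fun x y => g ⁅x, y⁆)
    (fun x x' y => by simp [add_lie])
    (fun t x y => by simp [smul_lie])
    (fun x y y' => by simp [lie_add])
    (fun t x y => by simp [lie_smul])
  map_add' g g' := by ext x y; simp
  map_smul' t g := by ext x y; simp

/-- The second Chevalley–Eilenberg cohomology of `L` with trivial coefficients `K`:
the image of the 2-cocycles in the quotient of the bilinear forms by the
2-coboundaries (i.e. `Z²(L,K)/B²(L,K)`, since `B² ⊆ Z²`). -/
abbrev lieH2 : Type _ :=
  ↥(Submodule.map (R := K) (M := L →ₗ[K] L →ₗ[K] K) (LinearMap.range (lieD1 K L)).mkQ (lieZ2 K L))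

end LieH2


section Aux

variable (K : Type*) [Field K]

@[simp] lemma lieD1_apply {L : Type*} [LieRing L] [LieAlgebra K L]
    (g : L →ₗ[K] K) (x y : L) : lieD1 K L g x y = g ⁅x, y⁆ := rfl

lemma aux_subsingleton_iff {L : Type*} [LieRing L] [LieAlgebra K L] :
    Subsingleton (lieH2 K L) ↔ lieZ2 K L ≤ LinearMap.range (lieD1 K L) := by
  rw [Submodule.subsingleton_iff_eq_bot]
  set B := LinearMap.range (lieD1 K L)
  constructor
  · intro hb f hf
    have hmem : B.mkQ f ∈ Submodule.map B.mkQ (lieZ2 K L) := ⟨f, hf, rfl⟩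
    rw [hb, Submodule.mem_bot] at hmem
    rw [Submodule.mkQ_apply, Submodule.Quotient.mk_eq_zero] at hmem
    exact hmem
  · intro hle
    rw [Submodule.eq_bot_iff]
    rintro x ⟨f, hf, rfl⟩
    rw [Submodule.mkQ_apply, Submodule.Quotient.mk_eq_zero]
    exact hle hf

lemma aux_pullback {L M : Type*} [LieRing L] [LieAlgebra K L] [LieRing M] [LieAlgebra K M]
    (π : L →ₗ[K] M) (σ : M →ₗ[K] L)
    (hπ : ∀ x y : L, π ⁅x, y⁆ = ⁅π x, π y⁆)
    (hσ : ∀ x y : M, σ ⁅x, y⁆ = ⁅σ x, σ y⁆)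
    (hπσ : ∀ x : M, π (σ x) = x)
    (h : lieZ2 K L ≤ LinearMap.range (lieD1 K L)) :
    lieZ2 K M ≤ LinearMap.range (lieD1 K M) := by
  intro f hf
  set F : L →ₗ[K] L →ₗ[K] K := ((f.comp π).compl₂ π) with hF
  have hFmem : F ∈ lieZ2 K L := by
    refine ⟨fun x => hf.1 (π x), fun x y z => ?_⟩
    have := hf.2 (π x) (π y) (π z)
    simpa [hF, hπ] using this
  obtain ⟨g, hg⟩ := h hFmem
  refine ⟨g.comp σ, ?_⟩
  ext x y
  have hval : F (σ x) (σ y) = f x y := by simp [hF, hπσ]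
  calc lieD1 K M (g.comp σ) x y = g (σ ⁅x, y⁆) := rfl
    _ = g ⁅σ x, σ y⁆ := by rw [hσ]
    _ = lieD1 K L g (σ x) (σ y) := rfl
    _ = f x y := by rw [hg]; exact hval

lemma aux_phi {L : Type*} [LieRing L] [LieAlgebra K L]
    (hne : ⁅(⊤ : LieIdeal K L), (⊤ : LieIdeal K L)⁆ ≠ ⊤) :
    ∃ φ : L →ₗ[K] K, (∀ x y : L, φ ⁅x, y⁆ = 0) ∧ ∃ a : L, φ a ≠ 0 := by
  set p : Submodule K L := ↑(⁅(⊤ : LieIdeal K L), (⊤ : LieIdeal K L)⁆ : LieIdeal K L) with hp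
  have hlt : p < ⊤ := lt_top_iff_ne_top.mpr (fun hc => hne ((LieSubmodule.toSubmodule_eq_top _).mp hc))
  obtain ⟨φ, hφ0, hφmap⟩ := Submodule.exists_dual_map_eq_bot_of_lt_top hlt inferInstance
  refine ⟨φ, fun x y => ?_, ?_⟩
  · have hxy : ⁅x, y⁆ ∈ p := (LieSubmodule.mem_toSubmodule _).mpr
      (LieSubmodule.lie_mem_lie (LieSubmodule.mem_top _) (LieSubmodule.mem_top _))
    have : φ ⁅x, y⁆ ∈ Submodule.map φ p := ⟨_, hxy, rfl⟩
    rw [hφmap, Submodule.mem_bot] at this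
    exact this
  · by_contra hc
    push_neg at hc
    exact hφ0 (by ext a; simp [hc a])

end Aux

/-- if H²(C₁ ⊕ C₂, K) = 0 then H²(C₁, K) = 0, H²(C₂, K) = 0, and at
least one of C₁, C₂ is perfect (equals its own derived algebra). -/
theorem H2_vanish_of_prod_H2_vanish
    (K : Type u) [Field K] [CharZero K]
    (C₁ C₂ : Type u)
    [LieRing C₁] [LieAlgebra K C₁] [Module.Finite K C₁]
    [LieRing C₂] [LieAlgebra K C₂] [Module.Finite K C₂]
    (h : Subsingleton (lieH2 K (C₁ × C₂))) :
    Subsingleton (lieH2 K C₁) ∧ Subsingleton (lieH2 K C₂) ∧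
      (⁅(⊤ : LieIdeal K C₁), (⊤ : LieIdeal K C₁)⁆ = ⊤ ∨
        ⁅(⊤ : LieIdeal K C₂), (⊤ : LieIdeal K C₂)⁆ = ⊤) := by
  have hprod := (aux_subsingleton_iff K).mp h
  have h1 : lieZ2 K C₁ ≤ LinearMap.range (lieD1 K C₁) :=
    aux_pullback K (LinearMap.fst K C₁ C₂) (LinearMap.inl K C₁ C₂)
      (fun x y => rfl) (fun x y => by ext <;> simp) (fun x => rfl) hprod
  have h2 : lieZ2 K C₂ ≤ LinearMap.range (lieD1 K C₂) :=
    aux_pullback K (LinearMap.snd K C₁ C₂) (LinearMap.inr K C₁ C₂)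
      (fun x y => rfl) (fun x y => by ext <;> simp) (fun x => rfl) hprod
  refine ⟨(aux_subsingleton_iff K).mpr h1, (aux_subsingleton_iff K).mpr h2, ?_⟩
  by_contra hc
  push_neg at hc
  obtain ⟨hn1, hn2⟩ := hc
  obtain ⟨φ₁, hφ₁, a, ha⟩ := aux_phi K hn1
  obtain ⟨φ₂, hφ₂, b, hb⟩ := aux_phi K hn2
  set f : (C₁ × C₂) →ₗ[K] (C₁ × C₂) →ₗ[K] K := LinearMap.mk₂ K
    (fun x y => φ₁ x.1 * φ₂ y.2 - φ₁ y.1 * φ₂ x.2)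
    (fun x x' y => by simp; ring)
    (fun t x y => by simp; ring)
    (fun x y y' => by simp; ring)
    (fun t x y => by simp; ring) with hfdef
  have hfZ : f ∈ lieZ2 K (C₁ × C₂) := by
    refine ⟨fun x => by simp [hfdef], fun x y z => ?_⟩
    simp [hfdef, hφ₁, hφ₂]
  obtain ⟨g, hg⟩ := hprod hfZ
  have hval := LinearMap.congr_fun (LinearMap.congr_fun hg (a, (0:C₂))) ((0:C₁), b)
  simp [hfdef] at hval
  simp only [Prod.mk_zero_zero, map_zero, zero_eq_mul, eq_comm (a := (0:K)), mul_eq_zero] at hval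
  rcases hval with h' | h'
  · exact ha h'
  · exact hb h'
end

section
/- Two almost abelian Lie algebras C = Kⁿ ⋊_D K·e₀ and C′ = Kⁿ ⋊_{D′} K·e₀′ are isomorphic if and only if there exist a nonzero scalar α ∈ K and an invertible linear map Φ ∈ GL_n(K) such that αD′ = Φ⁻¹DΦ. -/
/-- The almost abelian Lie algebra `Kⁿ ⋊_D K·e₀`: underlying space `Kⁿ × K`, with `Kⁿ`
an abelian ideal and `⁅e₀, v⁆ = D v`; explicitly
`⁅(v, a), (w, b)⁆ = (a • D w - b • D v, 0)`. -/
def AlmostAbelian (K : Type*) [Field K] (n : ℕ)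
    (D : (Fin n → K) →ₗ[K] (Fin n → K)) : Type _ := (Fin n → K) × K

namespace AlmostAbelian

variable (K : Type*) [Field K] (n : ℕ) (D : (Fin n → K) →ₗ[K] (Fin n → K))

instance : AddCommGroup (AlmostAbelian K n D) :=
  inferInstanceAs (AddCommGroup ((Fin n → K) × K))
instance : Module K (AlmostAbelian K n D) :=
  inferInstanceAs (Module K ((Fin n → K) × K))
instance : Module.Finite K (AlmostAbelian K n D) :=
  inferInstanceAs (Module.Finite K ((Fin n → K) × K))

variable {K n D}

/-- The `Kⁿ`-component. -/
def v (x : AlmostAbelian K n D) : Fin n → K := (x : (Fin n → K) × K).1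
/-- The `K·e₀`-component. -/
def t (x : AlmostAbelian K n D) : K := (x : (Fin n → K) × K).2
/-- Build an element from its two components. -/
def mk (w : Fin n → K) (a : K) : AlmostAbelian K n D := ((w, a) : (Fin n → K) × K)

@[simp] lemma v_mk (w : Fin n → K) (a : K) : v (mk w a : AlmostAbelian K n D) = w := rfl
@[simp] lemma t_mk (w : Fin n → K) (a : K) : t (mk w a : AlmostAbelian K n D) = a := rfl
@[simp] lemma v_zero : v (0 : AlmostAbelian K n D) = 0 := rfl
@[simp] lemma t_zero : t (0 : AlmostAbelian K n D) = 0 := rfl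
@[simp] lemma v_add (x y : AlmostAbelian K n D) : v (x + y) = v x + v y := rfl
@[simp] lemma t_add (x y : AlmostAbelian K n D) : t (x + y) = t x + t y := rfl
@[simp] lemma v_smul (c : K) (x : AlmostAbelian K n D) : v (c • x) = c • v x := rfl
@[simp] lemma t_smul (c : K) (x : AlmostAbelian K n D) : t (c • x) = c * t x := rfl

lemma ext' {x y : AlmostAbelian K n D} (h1 : v x = v y) (h2 : t x = t y) : x = y :=
  Prod.ext h1 h2

variable (K n D)

instance : LieRing (AlmostAbelian K n D) where
  bracket x y := mk (t x • D (v y) - t y • D (v x)) 0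
  add_lie x y z := by
    refine ext' ?_ ?_ <;> simp [map_add, add_smul, smul_add] <;> abel
  lie_add x y z := by
    refine ext' ?_ ?_ <;> simp [map_add, add_smul, smul_add] <;> abel
  lie_self x := by
    refine ext' ?_ ?_ <;> simp [v_zero, t_zero]
  leibniz_lie x y z := by
    refine ext' ?_ ?_ <;>
      simp [map_sub, map_smul, smul_sub, smul_smul, mul_comm] <;> abel

variable {K n D} in
@[simp] lemma v_lie (x y : AlmostAbelian K n D) :
    v ⁅x, y⁆ = t x • D (v y) - t y • D (v x) := rfl
variable {K n D} in
@[simp] lemma t_lie (x y : AlmostAbelian K n D) : t ⁅x, y⁆ = 0 := rfl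

instance : LieAlgebra K (AlmostAbelian K n D) where
  lie_smul c x y := by
    refine ext' ?_ ?_ <;> simp [map_smul, smul_sub, smul_smul, mul_comm]

end AlmostAbelian



open Module

section AuxLemmas

variable {K : Type*} [Field K]

/-- Two submodules of equal finite rank, each with a marked nonzero vector, are linearly
equivalent via an equivalence matching the marked vectors. -/
lemma aux_equiv_of_finrank_eq {V : Type*} [AddCommGroup V] [Module K V]
    [FiniteDimensional K V] (U₁ U₂ : Submodule K V)
    (h : finrank K U₁ = finrank K U₂) (u₁ : U₁) (u₂ : U₂) (h₁ : u₁ ≠ 0) (h₂ : u₂ ≠ 0) :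
    ∃ e : U₁ ≃ₗ[K] U₂, e u₁ = u₂ := by
  obtain ⟨W₁, hW₁⟩ := Submodule.exists_isCompl (K ∙ u₁)
  obtain ⟨W₂, hW₂⟩ := Submodule.exists_isCompl (K ∙ u₂)
  have f1 : finrank K (K ∙ u₁) = 1 := finrank_span_singleton h₁
  have f2 : finrank K (K ∙ u₂) = 1 := finrank_span_singleton h₂
  have e1 := Submodule.finrank_add_eq_of_isCompl hW₁
  have e2 := Submodule.finrank_add_eq_of_isCompl hW₂
  have hfr : finrank K W₁ = finrank K W₂ := by omega
  let eS : (K ∙ u₁) ≃ₗ[K] (K ∙ u₂) :=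
    (LinearEquiv.toSpanNonzeroSingleton K U₁ u₁ h₁).symm.trans
      (LinearEquiv.toSpanNonzeroSingleton K U₂ u₂ h₂)
  let eW : W₁ ≃ₗ[K] W₂ := LinearEquiv.ofFinrankEq _ _ hfr
  refine ⟨(Submodule.prodEquivOfIsCompl _ _ hW₁).symm.trans
    ((eS.prodCongr eW).trans (Submodule.prodEquivOfIsCompl _ _ hW₂)), ?_⟩
  have hu1 : (Submodule.prodEquivOfIsCompl _ _ hW₁).symm u₁ =
      ((⟨u₁, Submodule.mem_span_singleton_self u₁⟩ : K ∙ u₁), 0) := by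
    rw [LinearEquiv.symm_apply_eq]
    apply Subtype.ext
    rw [Submodule.coe_prodEquivOfIsCompl']
    simp
  have hS : eS ⟨u₁, Submodule.mem_span_singleton_self u₁⟩ =
      ⟨u₂, Submodule.mem_span_singleton_self u₂⟩ := by
    have : (LinearEquiv.toSpanNonzeroSingleton K U₁ u₁ h₁).symm
        ⟨u₁, Submodule.mem_span_singleton_self u₁⟩ = 1 := by
      rw [← LinearEquiv.toSpanNonzeroSingleton_one K U₁ u₁ h₁, LinearEquiv.symm_apply_apply]
    simp only [eS, LinearEquiv.trans_apply, this,
      LinearEquiv.toSpanNonzeroSingleton_one K U₂ u₂ h₂]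
  simp only [LinearEquiv.trans_apply, hu1, LinearEquiv.prodCongr_apply]
  apply Subtype.ext
  rw [Submodule.coe_prodEquivOfIsCompl']
  simp [hS]

/-- Any two rank-one square-zero endomorphisms are conjugate. -/
lemma aux_rank_one_conj {n : ℕ} (s p : Fin n → K) (τ σ : (Fin n → K) →ₗ[K] K)
    (hs : s ≠ 0) (hp : p ≠ 0) (hτ : τ ≠ 0) (hσ : σ ≠ 0) (hτs : τ s = 0) (hσp : σ p = 0) :
    ∃ Φ : (Fin n → K) ≃ₗ[K] (Fin n → K), ∀ x, Φ (σ x • p) = τ (Φ x) • s := by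
  obtain ⟨w₀, hw₀⟩ : ∃ w, τ w ≠ 0 := by
    by_contra hcon; push_neg at hcon; exact hτ (LinearMap.ext fun x => hcon x)
  obtain ⟨w₀', hw₀'⟩ : ∃ w, σ w ≠ 0 := by
    by_contra hcon; push_neg at hcon; exact hσ (LinearMap.ext fun x => hcon x)
  set w : Fin n → K := (τ w₀)⁻¹ • w₀ with hw
  set w' : Fin n → K := (σ w₀')⁻¹ • w₀' with hw'
  have hτw : τ w = 1 := by simp [hw, inv_mul_cancel₀ hw₀]
  have hσw' : σ w' = 1 := by simp [hw', inv_mul_cancel₀ hw₀']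
  -- the kernels have equal finrank
  have hrk : ∀ (φ : (Fin n → K) →ₗ[K] K) (x : Fin n → K), φ x = 1 →
      finrank K (LinearMap.ker φ) + 1 = n := by
    intro φ x hx
    have hsurj : Function.Surjective φ := fun c => ⟨c • x, by simp [hx]⟩
    have h1 : finrank K (LinearMap.range φ) = 1 := by
      rw [LinearMap.range_eq_top.2 hsurj, finrank_top, finrank_self]
    have h2 := LinearMap.finrank_range_add_finrank_ker φ
    rw [h1] at h2
    have h3 : finrank K (Fin n → K) = n := Module.finrank_fin_fun K
    omega
  have hkq : finrank K (LinearMap.ker σ) = finrank K (LinearMap.ker τ) := by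
    have a1 := hrk τ w hτw
    have a2 := hrk σ w' hσw'
    omega
  have hpmem : p ∈ LinearMap.ker σ := LinearMap.mem_ker.2 hσp
  have hsmem : s ∈ LinearMap.ker τ := LinearMap.mem_ker.2 hτs
  obtain ⟨M, hM⟩ := aux_equiv_of_finrank_eq (LinearMap.ker σ) (LinearMap.ker τ) hkq
    ⟨p, hpmem⟩ ⟨s, hsmem⟩ (by simpa [Subtype.ext_iff] using hp)
    (by simpa [Subtype.ext_iff] using hs)
  -- projections onto the kernels
  set πσ : (Fin n → K) →ₗ[K] LinearMap.ker σ :=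
    LinearMap.codRestrict _ (LinearMap.id - σ.smulRight w')
      (fun x => by simp [LinearMap.mem_ker, hσw']) with hπσ
  set πτ : (Fin n → K) →ₗ[K] LinearMap.ker τ :=
    LinearMap.codRestrict _ (LinearMap.id - τ.smulRight w)
      (fun x => by simp [LinearMap.mem_ker, hτw]) with hπτ
  set Φf : (Fin n → K) →ₗ[K] (Fin n → K) :=
    σ.smulRight w + (LinearMap.ker τ).subtype ∘ₗ M.toLinearMap ∘ₗ πσ with hΦf
  set Φb : (Fin n → K) →ₗ[K] (Fin n → K) :=
    τ.smulRight w' + (LinearMap.ker σ).subtype ∘ₗ M.symm.toLinearMap ∘ₗ πτ with hΦb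
  have hτker : ∀ y : LinearMap.ker τ, τ (y : Fin n → K) = 0 := fun y => y.2
  have hσker : ∀ y : LinearMap.ker σ, σ (y : Fin n → K) = 0 := fun y => y.2
  have hΦf_apply : ∀ x, Φf x = σ x • w + ((M (πσ x) : Fin n → K)) := fun x => rfl
  have hΦb_apply : ∀ x, Φb x = τ x • w' + ((M.symm (πτ x) : Fin n → K)) := fun x => rfl
  have hτΦf : ∀ x, τ (Φf x) = σ x := by
    intro x
    rw [hΦf_apply, map_add, map_smul, hτw, hτker (M (πσ x))]
    simp
  have hσΦb : ∀ x, σ (Φb x) = τ x := by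
    intro x
    rw [hΦb_apply, map_add, map_smul, hσw', hσker (M.symm (πτ x))]
    simp
  have hπτΦf : ∀ x, πτ (Φf x) = M (πσ x) := by
    intro x
    apply Subtype.ext
    show Φf x - τ (Φf x) • w = _
    rw [hτΦf, hΦf_apply]
    abel
  have hπσΦb : ∀ x, πσ (Φb x) = M.symm (πτ x) := by
    intro x
    apply Subtype.ext
    show Φb x - σ (Φb x) • w' = _
    rw [hσΦb, hΦb_apply]
    abel
  have hbf : ∀ x, Φb (Φf x) = x := by
    intro x
    rw [hΦb_apply, hτΦf, hπτΦf, LinearEquiv.symm_apply_apply]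
    show σ x • w' + (x - σ x • w') = x
    abel
  have hfb : ∀ x, Φf (Φb x) = x := by
    intro x
    rw [hΦf_apply, hσΦb, hπσΦb, LinearEquiv.apply_symm_apply]
    show τ x • w + (x - τ x • w) = x
    abel
  refine ⟨LinearEquiv.ofLinear Φf Φb (LinearMap.ext hfb) (LinearMap.ext hbf), ?_⟩
  intro x
  have hΦp : Φf p = s := by
    have : πσ p = ⟨p, hpmem⟩ := by
      apply Subtype.ext
      show p - σ p • w' = p
      rw [hσp]; simp
    rw [hΦf_apply, hσp, this, hM]
    simp
  show Φf (σ x • p) = τ (Φf x) • s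
  rw [map_smul, hΦp, hτΦf]

end AuxLemmas

section MainAux

open AlmostAbelian

variable {K : Type*} [Field K]

/-- Core case analysis: an isomorphism of almost abelian Lie algebras either yields a
proportional similarity directly, or forces `D` to be rank one and square zero. -/
lemma aux_iso_cases {n : ℕ} (D D' : (Fin n → K) →ₗ[K] (Fin n → K))
    (f : AlmostAbelian K n D ≃ₗ⁅K⁆ AlmostAbelian K n D') :
    (∃ α : K, α ≠ 0 ∧ ∃ Φ : (Fin n → K) ≃ₗ[K] (Fin n → K),
        α • D' = Φ.symm.toLinearMap ∘ₗ D ∘ₗ Φ.toLinearMap) ∨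
    (∃ (s : Fin n → K) (τ : (Fin n → K) →ₗ[K] K),
        τ ≠ 0 ∧ τ s = 0 ∧ ∀ w, D w = τ w • s) := by
  set F := f.toLinearEquiv with hF
  set g : (Fin n → K) →ₗ[K] (Fin n → K) :=
    LinearMap.fst K (Fin n → K) K ∘ₗ F.toLinearMap ∘ₗ LinearMap.inl K (Fin n → K) K with hg
  set τ : (Fin n → K) →ₗ[K] K :=
    LinearMap.snd K (Fin n → K) K ∘ₗ F.toLinearMap ∘ₗ LinearMap.inl K (Fin n → K) K with hτ
  have hFf : ∀ x : AlmostAbelian K n D, F x = f x := fun _ => rfl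
  have hcomp : ∀ w : Fin n → K, f (mk w 0) = mk (g w) (τ w) := fun w => rfl
  set u : Fin n → K := v (f (mk (0 : Fin n → K) (1 : K))) with hu
  set c : K := t (f (mk (0 : Fin n → K) (1 : K))) with hc
  have hmk01 : f (mk (0 : Fin n → K) (1 : K)) = mk u c := by
    exact AlmostAbelian.ext' rfl rfl
  -- bracket relation R1
  have R1 : ∀ w z : Fin n → K, τ w • D' (g z) - τ z • D' (g w) = 0 := by
    intro w z
    have h0 : (⁅(mk w 0 : AlmostAbelian K n D), (mk z 0 : AlmostAbelian K n D)⁆) = 0 := by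
      apply AlmostAbelian.ext' <;> simp
    have h1 := f.map_lie (mk w 0 : AlmostAbelian K n D) (mk z 0 : AlmostAbelian K n D)
    rw [h0, ← hFf, map_zero] at h1
    have h2 := congrArg v h1.symm
    rw [v_lie] at h2
    simpa [hcomp] using h2
  -- bracket relations R2
  have R2 : ∀ w : Fin n → K,
      g (D w) = c • D' (g w) - τ w • D' u ∧ τ (D w) = 0 := by
    intro w
    have hlie : (⁅(mk (0 : Fin n → K) (1 : K) : AlmostAbelian K n D), (mk w 0 : AlmostAbelian K n D)⁆) = mk (D w) 0 := by
      apply AlmostAbelian.ext' <;> simp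
    have h1 := f.map_lie (mk (0 : Fin n → K) (1 : K) : AlmostAbelian K n D) (mk w 0 : AlmostAbelian K n D)
    rw [hlie, hmk01, hcomp w] at h1
    constructor
    · have h2 := congrArg v h1
      rw [hcomp] at h2
      simpa using h2
    · have h2 := congrArg t h1
      rw [hcomp] at h2
      simpa using h2
  by_cases hτ0 : τ = 0
  · -- Case 1: f preserves the abelian part
    left
    have hf_mk : ∀ (w : Fin n → K) (a : K), f (mk w a) = mk (g w + a • u) (τ w + a * c) := by
      intro w a
      have hsplit : (mk w a : AlmostAbelian K n D) = mk w 0 + a • mk 0 1 :=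
        AlmostAbelian.ext' (by simp) (by simp)
      rw [hsplit, ← hFf, map_add, map_smul, hFf, hFf, hcomp, hmk01]
      exact AlmostAbelian.ext' (by simp) (by simp)
    have hc0 : c ≠ 0 := by
      obtain ⟨x, hx⟩ := F.surjective (mk (0 : Fin n → K) (1 : K))
      have hx' : f (mk (v x) (t x)) = mk 0 1 := by
        rw [← hx, hFf]
        congr 1
      rw [hf_mk] at hx'
      have := congrArg t hx'
      simp only [t_mk, hτ0, LinearMap.zero_apply, zero_add] at this
      intro hcc
      rw [hcc, mul_zero] at this
      exact one_ne_zero this.symm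
    have hginj : Function.Injective g := by
      intro w z hwz
      have : f (mk w 0) = f (mk z 0) := by
        rw [hcomp, hcomp, hτ0]
        exact AlmostAbelian.ext' hwz rfl
      have := f.injective this
      exact congrArg v this
    set Φg := LinearEquiv.ofInjectiveEndo g hginj with hΦg
    refine ⟨c, hc0, Φg.symm, ?_⟩
    apply LinearMap.ext
    intro x
    have h2 := (R2 (Φg.symm x)).1
    rw [hτ0] at h2
    simp only [LinearMap.zero_apply, zero_smul, sub_zero] at h2
    have hgapp : g (Φg.symm x) = x := Φg.apply_symm_apply x
    rw [hgapp] at h2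
    simp only [LinearMap.smul_apply, LinearMap.coe_comp, Function.comp_apply,
      LinearEquiv.coe_coe, LinearEquiv.symm_symm]
    rw [← h2]
    rfl
  · -- Case 2: D is rank one, square zero
    right
    obtain ⟨w₁, hw₁⟩ : ∃ w, τ w ≠ 0 := by
      by_contra hcon; push_neg at hcon; exact hτ0 (LinearMap.ext fun x => hcon x)
    set w₀ : Fin n → K := (τ w₁)⁻¹ • w₁ with hw₀def
    have hτw₀ : τ w₀ = 1 := by simp [hw₀def, inv_mul_cancel₀ hw₁]
    have hDg : ∀ w, D' (g w) = τ w • D' (g w₀) := by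
      intro w
      have := R1 w₀ w
      rw [hτw₀, one_smul, sub_eq_zero] at this
      exact this
    set s : Fin n → K := D w₀ with hs
    refine ⟨s, τ, hτ0, (R2 w₀).2, ?_⟩
    intro w
    have key : f (mk (D w) 0) = τ w • f (mk s 0) := by
      rw [hcomp, hcomp]
      have hv : g (D w) = τ w • g s := by
        rw [(R2 w).1, hDg w, hs, (R2 w₀).1, hτw₀, one_smul, smul_sub, smul_comm]
      have ht : τ (D w) = τ w * τ s := by
        rw [(R2 w).2, hs, (R2 w₀).2, mul_zero]
      exact AlmostAbelian.ext' (by simpa using hv) (by simpa using ht)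
    have : f (mk (D w) 0) = f (τ w • mk s 0) := by
      rw [key, ← hFf, ← hFf, map_smul]
    have := f.injective this
    have := congrArg v this
    simpa using this

end MainAux

/-- two almost abelian Lie algebras `Kⁿ ⋊_D K·e₀` and `Kⁿ ⋊_{D′} K·e₀′`
are isomorphic iff `D` and `D′` are proportionally similar, i.e. `α • D′ = Φ⁻¹ ∘ D ∘ Φ`
for some nonzero scalar `α` and some `Φ ∈ GL_n(K)`. -/
theorem almostAbelian_iso_iff_proportionally_similar
    (K : Type*) [Field K] [CharZero K] (n : ℕ)
    (D D' : (Fin n → K) →ₗ[K] (Fin n → K)) (hD : D ≠ 0) (hD' : D' ≠ 0) :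
    Nonempty (AlmostAbelian K n D ≃ₗ⁅K⁆ AlmostAbelian K n D') ↔
      ∃ α : K, α ≠ 0 ∧ ∃ Φ : (Fin n → K) ≃ₗ[K] (Fin n → K),
        α • D' = Φ.symm.toLinearMap ∘ₗ D ∘ₗ Φ.toLinearMap := by
  constructor
  · rintro ⟨f⟩
    rcases aux_iso_cases D D' f with h | ⟨s, τ, hτ, hτs, hDs⟩
    · exact h
    rcases aux_iso_cases D' D f.symm with h | ⟨p, σ, hσ, hσp, hD's⟩
    · obtain ⟨α, hα, Ψ, hΨ⟩ := h
      refine ⟨α⁻¹, inv_ne_zero hα, Ψ.symm, ?_⟩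
      apply LinearMap.ext
      intro x
      have h1 := LinearMap.congr_fun hΨ (Ψ.symm x)
      simp only [LinearMap.smul_apply, LinearMap.coe_comp, Function.comp_apply,
        LinearEquiv.coe_coe, LinearEquiv.apply_symm_apply] at h1
      -- h1 : α • D (Ψ.symm x) = Ψ.symm (D' x)
      simp only [LinearMap.smul_apply, LinearMap.coe_comp, Function.comp_apply,
        LinearEquiv.coe_coe, LinearEquiv.symm_symm]
      -- goal : α⁻¹ • D' x = Ψ (D (Ψ.symm x))
      have h2 := congrArg Ψ h1
      rw [map_smul, LinearEquiv.apply_symm_apply] at h2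
      rw [← h2, smul_smul, inv_mul_cancel₀ hα, one_smul]
    · have hs : s ≠ 0 := by
        rintro rfl
        exact hD (LinearMap.ext fun w => by simp [hDs])
      have hp : p ≠ 0 := by
        rintro rfl
        exact hD' (LinearMap.ext fun w => by simp [hD's])
      obtain ⟨Φ, hΦ⟩ := aux_rank_one_conj s p τ σ hs hp hτ hσ hτs hσp
      refine ⟨1, one_ne_zero, Φ, ?_⟩
      apply LinearMap.ext
      intro x
      simp only [LinearMap.smul_apply, one_smul, LinearMap.coe_comp, Function.comp_apply,
        LinearEquiv.coe_coe]
      rw [hDs (Φ x), ← hΦ x, LinearEquiv.symm_apply_apply, hD's x]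
  · rintro ⟨α, hα, Φ, h⟩
    have key : ∀ w, Φ.symm (D w) = α • D' (Φ.symm w) := by
      intro w
      have h1 := LinearMap.congr_fun h (Φ.symm w)
      simp only [LinearMap.smul_apply, LinearMap.coe_comp, Function.comp_apply,
        LinearEquiv.coe_coe, LinearEquiv.apply_symm_apply] at h1
      exact h1.symm
    set E : AlmostAbelian K n D ≃ₗ[K] AlmostAbelian K n D' :=
      (Φ.symm.prodCongr (LinearEquiv.smulOfNeZero K K α hα) :
        ((Fin n → K) × K) ≃ₗ[K] ((Fin n → K) × K)) with hE
    have hEv : ∀ x : AlmostAbelian K n D, AlmostAbelian.v (E x) = Φ.symm (AlmostAbelian.v x) :=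
      fun x => rfl
    have hEt : ∀ x : AlmostAbelian K n D, AlmostAbelian.t (E x) = α * AlmostAbelian.t x :=
      fun x => rfl
    refine ⟨{ E with map_lie' := ?_ }⟩
    intro x y
    show E ⁅x, y⁆ = ⁅E x, E y⁆
    apply AlmostAbelian.ext'
    · rw [hEv, AlmostAbelian.v_lie, AlmostAbelian.v_lie, hEt, hEt, hEv, hEv,
        map_sub, map_smul, map_smul, key, key]
      simp [smul_smul, mul_comm]
    · rw [hEt, AlmostAbelian.t_lie, AlmostAbelian.t_lie, mul_zero]
end
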